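/- arXiv:2203.03687 — 6 statements merged into one kernel-verified Lean document; each statement's English description precedes it below -/
import Mathlib

section
/- Let 𝔖 be a set association scheme of rank r on a finite set Ω and let G be a subgroup of Sym(k), k ≥ 1. Then the wreath product 𝔖 ≀ G is a set association scheme on Ω × [k], and its rank equals the number of orbits of G acting on [r]^k (where G acts on k-tuples by permuting positions). -/
namespace Paper


def IsTriangle {Ω : Type*} (a b c : Set Ω) : Prop :=
  a ⊆ b ∪ c ∧ b ⊆ a ∪ c ∧ c ⊆ a ∪ b

noncomputable def tripleType {Ω : Type*} (a b c : Set Ω) : ℕ × ℕ × ℕ × ℕ × ℕ × ℕ × ℕ :=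
  (a.ncard, b.ncard, c.ncard, (a ∩ b).ncard, (a ∩ c).ncard, (b ∩ c).ncard, (a ∩ b ∩ c).ncard)

noncomputable def typeCount {Ω : Type*} (β γ : Set (Set Ω)) (a : Set Ω) (τ : ℕ × ℕ × ℕ × ℕ × ℕ × ℕ × ℕ) : ℕ :=
  {p : Set Ω × Set Ω | p.1 ∈ β ∧ p.2 ∈ γ ∧ tripleType a p.1 p.2 = τ}.ncard

def IsSAS {Ω : Type*} (S : Set (Set (Set Ω))) : Prop :=
  Setoid.IsPartition S ∧
  (∀ α ∈ S, ∀ a ∈ α, ∀ a' ∈ α, Set.ncard a = Set.ncard a') ∧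
  (∀ α ∈ S, ∀ β ∈ S, ∀ γ ∈ S, ∀ a ∈ α, ∀ a' ∈ α,
    ∀ t₁ t₂ t₃ : Set Ω, IsTriangle t₁ t₂ t₃ →
      typeCount β γ a (tripleType t₁ t₂ t₃) = typeCount β γ a' (tripleType t₁ t₂ t₃))

def SetHomog {Ω : Type*} (S : Set (Set (Set Ω))) : Prop :=
  {a : Set Ω | ∃ v : Ω, a = {v}} ∈ S

def fiber {Ω : Type*} {k : ℕ} (s : Set (Ω × Fin k)) (j : Fin k) : Set Ω := {ω | (ω, j) ∈ s}

def wreath {Ω : Type*} (S : Set (Set (Set Ω))) {k : ℕ} (G : Subgroup (Equiv.Perm (Fin k))) :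
    Set (Set (Set (Ω × Fin k))) :=
  {c | ∃ α : Fin k → Set (Set Ω), (∀ j, α j ∈ S) ∧
      c = {s : Set (Ω × Fin k) | ∃ π ∈ G, ∀ j, fiber s j ∈ α (π⁻¹ j)}}

theorem Equiv.Perm.inv_apply_self {α : Type*} (f : Equiv.Perm α) (x : α) : f⁻¹ (f x) = x :=
  f.symm_apply_apply x

theorem Equiv.Perm.apply_inv_self {α : Type*} (f : Equiv.Perm α) (x : α) : f (f⁻¹ x) = x :=
  f.apply_symm_apply x

section Basic
variable {Ω : Type*} {k : ℕ}

lemma fiber_inter (a b : Set (Ω × Fin k)) (j : Fin k) : fiber (a ∩ b) j = fiber a j ∩ fiber b j := rfl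

def sigmaFiberEquiv (s : Set (Ω × Fin k)) : s ≃ Σ j : Fin k, fiber s j where
  toFun x := ⟨x.1.2, x.1.1, x.2⟩
  invFun y := ⟨(y.2.1, y.1), y.2.2⟩
  left_inv := fun ⟨⟨ω, j⟩, h⟩ => rfl
  right_inv := fun ⟨j, ω, h⟩ => rfl

lemma nat_card_sigma {ι : Type*} [Fintype ι] (F : ι → Type*) [∀ i, Finite (F i)] :
    Nat.card (Σ i, F i) = ∑ i, Nat.card (F i) := by
  classical
  haveI : ∀ i, Fintype (F i) := fun i => Fintype.ofFinite _
  simp [Nat.card_eq_fintype_card, Fintype.card_sigma]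

lemma ncard_eq_sum_fibers [Finite Ω] (s : Set (Ω × Fin k)) :
    s.ncard = ∑ j, (fiber s j).ncard := by
  classical
  haveI : Fintype Ω := Fintype.ofFinite Ω
  rw [← Nat.card_coe_set_eq, Nat.card_congr (sigmaFiberEquiv s), nat_card_sigma]
  exact Finset.sum_congr rfl fun j _ => Nat.card_coe_set_eq _

def sumT (u : Fin k → ℕ × ℕ × ℕ × ℕ × ℕ × ℕ × ℕ) : ℕ × ℕ × ℕ × ℕ × ℕ × ℕ × ℕ :=
  (∑ j, (u j).1, ∑ j, (u j).2.1, ∑ j, (u j).2.2.1, ∑ j, (u j).2.2.2.1,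
    ∑ j, (u j).2.2.2.2.1, ∑ j, (u j).2.2.2.2.2.1, ∑ j, (u j).2.2.2.2.2.2)

lemma tripleType_eq_sum [Finite Ω] (a b c : Set (Ω × Fin k)) :
    tripleType a b c = sumT (fun j => tripleType (fiber a j) (fiber b j) (fiber c j)) := by
  simp only [tripleType, sumT, Prod.mk.injEq]
  exact ⟨ncard_eq_sum_fibers a, ncard_eq_sum_fibers b, ncard_eq_sum_fibers c,
    ncard_eq_sum_fibers (a ∩ b), ncard_eq_sum_fibers (a ∩ c), ncard_eq_sum_fibers (b ∩ c),
    ncard_eq_sum_fibers (a ∩ b ∩ c)⟩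

lemma sumT_comp (u : Fin k → ℕ × ℕ × ℕ × ℕ × ℕ × ℕ × ℕ) (ρ : Equiv.Perm (Fin k)) :
    sumT (fun j => u (ρ j)) = sumT u := by
  simp only [sumT, Prod.mk.injEq]
  exact ⟨Equiv.sum_comp ρ (fun j => (u j).1), Equiv.sum_comp ρ (fun j => (u j).2.1),
    Equiv.sum_comp ρ (fun j => (u j).2.2.1), Equiv.sum_comp ρ (fun j => (u j).2.2.2.1),
    Equiv.sum_comp ρ (fun j => (u j).2.2.2.2.1), Equiv.sum_comp ρ (fun j => (u j).2.2.2.2.2.1),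
    Equiv.sum_comp ρ (fun j => (u j).2.2.2.2.2.2)⟩

lemma isTriangle_fiber {a b c : Set (Ω × Fin k)} (h : IsTriangle a b c) (j : Fin k) :
    IsTriangle (fiber a j) (fiber b j) (fiber c j) := by
  obtain ⟨h1, h2, h3⟩ := h
  exact ⟨fun ω hω => h1 hω, fun ω hω => h2 hω, fun ω hω => h3 hω⟩

lemma ncard_inter_union [Finite Ω] (a b c : Set Ω) :
    (a ∩ (b ∪ c)).ncard + (a ∩ b ∩ c).ncard = (a ∩ b).ncard + (a ∩ c).ncard := by
  have h := Set.ncard_union_add_ncard_inter (a ∩ b) (a ∩ c) (Set.toFinite _) (Set.toFinite _)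
  have h1 : a ∩ b ∪ a ∩ c = a ∩ (b ∪ c) := (Set.inter_union_distrib_left a b c).symm
  have h2 : (a ∩ b) ∩ (a ∩ c) = a ∩ b ∩ c := by ext x; simp only [Set.mem_inter_iff]; tauto
  rw [h1, h2] at h
  exact h

lemma subset_union_iff_ncard [Finite Ω] {a b c : Set Ω} :
    a ⊆ b ∪ c ↔ (a ∩ b).ncard + (a ∩ c).ncard = a.ncard + (a ∩ b ∩ c).ncard := by
  rw [← ncard_inter_union a b c]
  constructor
  · intro h
    rw [Set.inter_eq_left.mpr h]
  · intro h
    have h' : a.ncard ≤ (a ∩ (b ∪ c)).ncard := by omega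
    have := Set.eq_of_subset_of_ncard_le Set.inter_subset_left h' (Set.toFinite _)
    rw [← Set.inter_eq_left]
    exact this

lemma isTriangle_of_tripleType_eq {Ω' : Type*} [Finite Ω'] {a b c x y z : Set Ω'}
    (h : IsTriangle x y z) (he : tripleType a b c = tripleType x y z) : IsTriangle a b c := by
  simp only [tripleType, Prod.mk.injEq] at he
  obtain ⟨e1, e2, e3, e4, e5, e6, e7⟩ := he
  have perm3 : ∀ u v w : Set Ω', u ∩ w ∩ v = u ∩ v ∩ w := by
    intro u v w; ext t; simp only [Set.mem_inter_iff]; tauto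
  refine ⟨?_, ?_, ?_⟩
  · rw [subset_union_iff_ncard, e4, e5, e1, e7]
    exact subset_union_iff_ncard.mp h.1
  · have h2 := subset_union_iff_ncard.mp h.2.1
    rw [Set.inter_comm y x] at h2
    rw [subset_union_iff_ncard, Set.inter_comm b a, e4, e6, e2, e7]
    exact h2
  · have h3 := subset_union_iff_ncard.mp h.2.2
    rw [Set.inter_comm z x, Set.inter_comm z y, perm3 x y z] at h3
    rw [subset_union_iff_ncard, Set.inter_comm c a, Set.inter_comm c b, perm3 a b c,
      e5, e6, e3, e7]
    exact h3

end Basic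

section Cells
variable {X : Type*}

noncomputable def cellOf {S : Set (Set X)} (hS : Setoid.IsPartition S) (x : X) : Set X :=
  (hS.2 x).choose

lemma cellOf_mem {S : Set (Set X)} (hS : Setoid.IsPartition S) (x : X) :
    cellOf hS x ∈ S := (hS.2 x).choose_spec.1.1

lemma mem_cellOf {S : Set (Set X)} (hS : Setoid.IsPartition S) (x : X) :
    x ∈ cellOf hS x := (hS.2 x).choose_spec.1.2

lemma cellOf_eq {S : Set (Set X)} (hS : Setoid.IsPartition S) {x : X} {α : Set X}
    (hα : α ∈ S) (hx : x ∈ α) : α = cellOf hS x :=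
  (hS.2 x).choose_spec.2 α ⟨hα, hx⟩

lemma cell_nonempty {S : Set (Set X)} (hS : Setoid.IsPartition S) {α : Set X} (hα : α ∈ S) :
    α.Nonempty := by
  rw [Set.nonempty_iff_ne_empty]
  rintro rfl
  exact hS.1 hα

end Cells

section FiberProd
variable {Ω : Type*} {k : ℕ}

lemma typeCount_eq_nat_card (β γ : Set (Set Ω)) (a : Set Ω) (τ : ℕ × ℕ × ℕ × ℕ × ℕ × ℕ × ℕ) :
    typeCount β γ a τ =
      Nat.card {p : Set Ω × Set Ω // p.1 ∈ β ∧ p.2 ∈ γ ∧ tripleType a p.1 p.2 = τ} :=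
  (Nat.card_coe_set_eq _).symm

def fiberPairEquiv (a : Set (Ω × Fin k)) (β' γ' : Fin k → Set (Set Ω))
    (t : Fin k → ℕ × ℕ × ℕ × ℕ × ℕ × ℕ × ℕ) :
    {p : Set (Ω × Fin k) × Set (Ω × Fin k) //
        ∀ j, fiber p.1 j ∈ β' j ∧ fiber p.2 j ∈ γ' j ∧
          tripleType (fiber a j) (fiber p.1 j) (fiber p.2 j) = t j} ≃
      ∀ j : Fin k, {q : Set Ω × Set Ω //
        q.1 ∈ β' j ∧ q.2 ∈ γ' j ∧ tripleType (fiber a j) q.1 q.2 = t j} where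
  toFun x j := ⟨(fiber x.1.1 j, fiber x.1.2 j), x.2 j⟩
  invFun g := ⟨({z : Ω × Fin k | z.1 ∈ ((g z.2).1).1}, {z : Ω × Fin k | z.1 ∈ ((g z.2).1).2}),
    fun j => by
      have hb : fiber {z : Ω × Fin k | z.1 ∈ ((g z.2).1).1} j = ((g j).1).1 := Set.setOf_mem_eq
      have hc : fiber {z : Ω × Fin k | z.1 ∈ ((g z.2).1).2} j = ((g j).1).2 := Set.setOf_mem_eq
      rw [hb, hc]
      exact (g j).2⟩
  left_inv x := by
    apply Subtype.ext
    apply Prod.ext <;> · ext ⟨ω, j⟩; exact Iff.rfl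
  right_inv g := by
    funext j
    apply Subtype.ext
    apply Prod.ext <;> exact Set.setOf_mem_eq

lemma card_fiberwise_prod [Finite Ω] (a : Set (Ω × Fin k)) (β' γ' : Fin k → Set (Set Ω))
    (t : Fin k → ℕ × ℕ × ℕ × ℕ × ℕ × ℕ × ℕ) :
    Nat.card {p : Set (Ω × Fin k) × Set (Ω × Fin k) //
        ∀ j, fiber p.1 j ∈ β' j ∧ fiber p.2 j ∈ γ' j ∧
          tripleType (fiber a j) (fiber p.1 j) (fiber p.2 j) = t j} =
      ∏ j, typeCount (β' j) (γ' j) (fiber a j) (t j) := by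
  rw [Nat.card_congr (fiberPairEquiv a β' γ' t), Nat.card_pi]
  exact Finset.prod_congr rfl fun j _ => (typeCount_eq_nat_card _ _ _ _).symm

end FiberProd

section Decomp
variable {Ω : Type*} {k : ℕ}

/-- The index data type: tuples of cells for b, tuples of cells for c, tuples of types. -/
abbrev PtType (Ω : Type*) (k : ℕ) :=
  (Fin k → Set (Set Ω)) × (Fin k → Set (Set Ω)) × (Fin k → ℕ × ℕ × ℕ × ℕ × ℕ × ℕ × ℕ)

def GoodPt (G : Subgroup (Equiv.Perm (Fin k))) (β γ : Fin k → Set (Set Ω))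
    (τ : ℕ × ℕ × ℕ × ℕ × ℕ × ℕ × ℕ) (pt : PtType Ω k) : Prop :=
  (∃ π ∈ G, ∀ j, pt.1 j = β (π⁻¹ j)) ∧ (∃ π ∈ G, ∀ j, pt.2.1 j = γ (π⁻¹ j)) ∧
    sumT pt.2.2 = τ ∧
    (∀ j, ∃ x y z : Set Ω, IsTriangle x y z ∧ pt.2.2 j = tripleType x y z)

noncomputable def wcount (G : Subgroup (Equiv.Perm (Fin k))) (β γ : Fin k → Set (Set Ω))
    (τ : ℕ × ℕ × ℕ × ℕ × ℕ × ℕ × ℕ) (a : Set (Ω × Fin k)) (pt : PtType Ω k) : ℕ :=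
  open scoped Classical in
  if GoodPt G β γ τ pt then ∏ j, typeCount (pt.1 j) (pt.2.1 j) (fiber a j) (pt.2.2 j) else 0

lemma decomposition [Finite Ω] (S : Set (Set (Set Ω))) (hS : IsSAS S)
    (G : Subgroup (Equiv.Perm (Fin k))) (β γ : Fin k → Set (Set Ω))
    (hβ : ∀ j, β j ∈ S) (hγ : ∀ j, γ j ∈ S) (a : Set (Ω × Fin k))
    {t₁ t₂ t₃ : Set (Ω × Fin k)} (htri : IsTriangle t₁ t₂ t₃) :
    typeCount {s | ∃ π ∈ G, ∀ j, fiber s j ∈ β (π⁻¹ j)}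
        {s | ∃ π ∈ G, ∀ j, fiber s j ∈ γ (π⁻¹ j)} a (tripleType t₁ t₂ t₃) =
      ∑ᶠ pt : PtType Ω k, wcount G β γ (tripleType t₁ t₂ t₃) a pt := by
  classical
  set τ := tripleType t₁ t₂ t₃ with hτ
  set B : Set (Set (Ω × Fin k)) := {s | ∃ π ∈ G, ∀ j, fiber s j ∈ β (π⁻¹ j)} with hB
  set C : Set (Set (Ω × Fin k)) := {s | ∃ π ∈ G, ∀ j, fiber s j ∈ γ (π⁻¹ j)} with hC
  set Pset : Set (Set (Ω × Fin k) × Set (Ω × Fin k)) :=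
    {p | p.1 ∈ B ∧ p.2 ∈ C ∧ tripleType a p.1 p.2 = τ} with hPset
  have hPfin : Pset.Finite := Set.toFinite _
  set Pfin := hPfin.toFinset with hPfinDef
  set Θ : Set (Ω × Fin k) × Set (Ω × Fin k) → PtType Ω k := fun p =>
    (fun j => cellOf hS.1 (fiber p.1 j), fun j => cellOf hS.1 (fiber p.2 j),
      fun j => tripleType (fiber a j) (fiber p.1 j) (fiber p.2 j)) with hΘ
  -- members of Pset have Good image
  have hmemGood : ∀ p ∈ Pset, GoodPt G β γ τ (Θ p) := by
    rintro p ⟨hb, hc, ht⟩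
    obtain ⟨π, hπ, hfb⟩ := hb
    obtain ⟨π', hπ', hfc⟩ := hc
    have htr : IsTriangle a p.1 p.2 := isTriangle_of_tripleType_eq htri ht
    refine ⟨⟨π, hπ, fun j => (cellOf_eq hS.1 (hβ (π⁻¹ j)) (hfb j)).symm⟩,
      ⟨π', hπ', fun j => (cellOf_eq hS.1 (hγ (π'⁻¹ j)) (hfc j)).symm⟩,
      (tripleType_eq_sum a p.1 p.2).symm.trans ht, fun j =>
      ⟨fiber a j, fiber p.1 j, fiber p.2 j, isTriangle_fiber htr j, rfl⟩⟩
  -- fiber counts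
  have hfib : ∀ pt, (Pfin.filter (fun p => Θ p = pt)).card = wcount G β γ τ a pt := by
    intro pt
    by_cases hg : GoodPt G β γ τ pt
    · have hsetEq : (↑(Pfin.filter (fun p => Θ p = pt)) : Set (Set (Ω × Fin k) × Set (Ω × Fin k)))
          = {p | ∀ j, fiber p.1 j ∈ pt.1 j ∧ fiber p.2 j ∈ pt.2.1 j ∧
              tripleType (fiber a j) (fiber p.1 j) (fiber p.2 j) = pt.2.2 j} := by
        ext p
        simp only [Finset.coe_filter, Set.mem_setOf_eq, Set.Finite.mem_toFinset, hPfinDef]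
        constructor
        · rintro ⟨hp, hΘp⟩
          intro j
          obtain ⟨hb, hc, ht⟩ := hp
          refine ⟨?_, ?_, ?_⟩
          · rw [← hΘp]; exact mem_cellOf hS.1 _
          · rw [← hΘp]; exact mem_cellOf hS.1 _
          · rw [← hΘp]
        · intro hfw
          obtain ⟨⟨π, hπ, hβ'⟩, ⟨π', hπ', hγ'⟩, hsum, _⟩ := hg
          have hbmem : p.1 ∈ B := ⟨π, hπ, fun j => (hβ' j) ▸ (hfw j).1⟩
          have hcmem : p.2 ∈ C := ⟨π', hπ', fun j => (hγ' j) ▸ (hfw j).2.1⟩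
          have httot : tripleType a p.1 p.2 = τ := by
            rw [tripleType_eq_sum a p.1 p.2]
            rw [funext fun j => (hfw j).2.2]
            exact hsum
          refine ⟨⟨hbmem, hcmem, httot⟩, ?_⟩
          refine Prod.ext ?_ (Prod.ext ?_ ?_)
          · funext j
            refine (cellOf_eq hS.1 ?_ (hfw j).1).symm
            rw [hβ' j]; exact hβ _
          · funext j
            refine (cellOf_eq hS.1 ?_ (hfw j).2.1).symm
            rw [hγ' j]; exact hγ _
          · funext j
            exact (hfw j).2.2
      rw [wcount, if_pos hg, ← card_fiberwise_prod a pt.1 pt.2.1 pt.2.2,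
        ← Set.ncard_coe_finset, hsetEq, ← Nat.card_coe_set_eq]
      exact Nat.card_congr (Equiv.subtypeEquivRight fun p => Iff.rfl)
    · rw [wcount, if_neg hg]
      rw [Finset.card_eq_zero, Finset.filter_eq_empty_iff]
      intro p hp
      rw [Set.Finite.mem_toFinset] at hp
      exact fun hΘp => hg (hΘp ▸ hmemGood p hp)
  -- main chain
  have hcount : typeCount B C a τ = Pfin.card := by
    rw [typeCount, Set.ncard_eq_toFinset_card _ hPfin]
  have hfiber : Pfin.card = ∑ pt ∈ Pfin.image Θ, (Pfin.filter (fun p => Θ p = pt)).card :=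
    Finset.card_eq_sum_card_fiberwise fun p hp => Finset.mem_image_of_mem Θ hp
  have hsupp : Function.support (wcount G β γ τ a) ⊆ ↑(Pfin.image Θ) := by
    intro pt hpt
    rw [Function.mem_support, ← hfib] at hpt
    obtain ⟨p, hp⟩ := Finset.card_pos.mp (Nat.pos_of_ne_zero hpt)
    rw [Finset.mem_filter] at hp
    exact Finset.mem_coe.mpr (hp.2 ▸ Finset.mem_image_of_mem Θ hp.1)
  rw [hcount, hfiber, finsum_eq_finset_sum_of_support_subset _ hsupp]
  exact Finset.sum_congr rfl fun pt _ => hfib pt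

end Decomp

section Reg
variable {Ω : Type*} {k : ℕ}

lemma GoodPt_comp_of {G : Subgroup (Equiv.Perm (Fin k))} {β γ : Fin k → Set (Set Ω)}
    {τ : ℕ × ℕ × ℕ × ℕ × ℕ × ℕ × ℕ} {ρ : Equiv.Perm (Fin k)} (hρ : ρ ∈ G) {pt : PtType Ω k}
    (h : GoodPt G β γ τ pt) : GoodPt G β γ τ (pt.1 ∘ ρ, pt.2.1 ∘ ρ, pt.2.2 ∘ ρ) := by
  obtain ⟨⟨π, hπ, h1⟩, ⟨π', hπ', h2⟩, h3, h4⟩ := h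
  refine ⟨⟨ρ⁻¹ * π, mul_mem (inv_mem hρ) hπ, fun j => ?_⟩,
    ⟨ρ⁻¹ * π', mul_mem (inv_mem hρ) hπ', fun j => ?_⟩, ?_, fun j => h4 (ρ j)⟩
  · show pt.1 (ρ j) = β ((ρ⁻¹ * π)⁻¹ j)
    rw [mul_inv_rev, inv_inv, Equiv.Perm.mul_apply]
    exact h1 (ρ j)
  · show pt.2.1 (ρ j) = γ ((ρ⁻¹ * π')⁻¹ j)
    rw [mul_inv_rev, inv_inv, Equiv.Perm.mul_apply]
    exact h2 (ρ j)
  · show sumT (pt.2.2 ∘ ρ) = τ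
    rw [show pt.2.2 ∘ ρ = fun j => pt.2.2 (ρ j) from rfl, sumT_comp]
    exact h3

lemma wreath_regular [Finite Ω] (S : Set (Set (Set Ω))) (hS : IsSAS S)
    (G : Subgroup (Equiv.Perm (Fin k))) :
    ∀ A ∈ wreath S G, ∀ B ∈ wreath S G, ∀ C ∈ wreath S G, ∀ a ∈ A, ∀ a' ∈ A,
      ∀ t₁ t₂ t₃ : Set (Ω × Fin k), IsTriangle t₁ t₂ t₃ →
        typeCount B C a (tripleType t₁ t₂ t₃) = typeCount B C a' (tripleType t₁ t₂ t₃) := by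
  rintro A ⟨α, hα, rfl⟩ B ⟨β, hβ, rfl⟩ C ⟨γ, hγ, rfl⟩ a ha a' ha' t₁ t₂ t₃ htri
  obtain ⟨σ, hσ, hfa⟩ := ha
  obtain ⟨σ', hσ', hfa'⟩ := ha'
  rw [decomposition S hS G β γ hβ hγ a htri, decomposition S hS G β γ hβ hγ a' htri]
  set τ := tripleType t₁ t₂ t₃ with hτ
  set ρ : Equiv.Perm (Fin k) := σ * σ'⁻¹ with hρdef
  have hρ : ρ ∈ G := mul_mem hσ (inv_mem hσ')
  set eρ : PtType Ω k ≃ PtType Ω k :=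
    { toFun := fun pt => (pt.1 ∘ ρ, pt.2.1 ∘ ρ, pt.2.2 ∘ ρ)
      invFun := fun pt => (fun j => pt.1 (ρ⁻¹ j), fun j => pt.2.1 (ρ⁻¹ j),
        fun j => pt.2.2 (ρ⁻¹ j))
      left_inv := by
        intro pt
        refine Prod.ext ?_ (Prod.ext ?_ ?_) <;> funext j <;>
          simp [Function.comp, Equiv.Perm.apply_inv_self]
      right_inv := by
        intro pt
        refine Prod.ext ?_ (Prod.ext ?_ ?_) <;> funext j <;>
          simp [Function.comp, Equiv.Perm.inv_apply_self] } with heρ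
  have hGoodIff : ∀ pt : PtType Ω k, GoodPt G β γ τ (eρ pt) ↔ GoodPt G β γ τ pt := by
    intro pt
    constructor
    · intro h
      have h2 := GoodPt_comp_of (inv_mem hρ) h
      have h3 : ((eρ pt).1 ∘ (⇑(ρ⁻¹) : Fin k → Fin k),
          (eρ pt).2.1 ∘ (⇑(ρ⁻¹) : Fin k → Fin k),
          (eρ pt).2.2 ∘ (⇑(ρ⁻¹) : Fin k → Fin k)) = pt := by
        refine Prod.ext ?_ (Prod.ext ?_ ?_) <;> funext j <;>
          simp [heρ, Function.comp, Equiv.Perm.apply_inv_self]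
      rwa [h3] at h2
    · exact GoodPt_comp_of hρ
  have hkey : ∀ pt, wcount G β γ τ a pt = wcount G β γ τ a' (eρ pt) := by
    intro pt
    by_cases hg : GoodPt G β γ τ pt
    · simp only [wcount, if_pos hg, if_pos ((hGoodIff pt).mpr hg)]
      calc
        ∏ j, typeCount (pt.1 j) (pt.2.1 j) (fiber a j) (pt.2.2 j)
            = ∏ j, typeCount (pt.1 (σ j)) (pt.2.1 (σ j)) (fiber a (σ j)) (pt.2.2 (σ j)) :=
          (Equiv.prod_comp σ (fun j => typeCount (pt.1 j) (pt.2.1 j) (fiber a j) (pt.2.2 j))).symm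
        _ = ∏ j, typeCount (pt.1 (σ j)) (pt.2.1 (σ j)) (fiber a' (σ' j)) (pt.2.2 (σ j)) := by
          refine Finset.prod_congr rfl fun j _ => ?_
          obtain ⟨x, y, z, hxyz, heq⟩ := hg.2.2.2 (σ j)
          have hβmem : pt.1 (σ j) ∈ S := by
            obtain ⟨π, hπ, h1⟩ := hg.1; rw [h1 (σ j)]; exact hβ _
          have hγmem : pt.2.1 (σ j) ∈ S := by
            obtain ⟨π, hπ, h1⟩ := hg.2.1; rw [h1 (σ j)]; exact hγ _
          have hamem : fiber a (σ j) ∈ α j := by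
            have := hfa (σ j); rwa [Equiv.Perm.inv_apply_self] at this
          have hamem' : fiber a' (σ' j) ∈ α j := by
            have := hfa' (σ' j); rwa [Equiv.Perm.inv_apply_self] at this
          rw [heq]
          exact hS.2.2 (α j) (hα j) _ hβmem _ hγmem _ hamem _ hamem' x y z hxyz
        _ = ∏ j, typeCount (pt.1 (ρ (σ' j))) (pt.2.1 (ρ (σ' j))) (fiber a' (σ' j))
              (pt.2.2 (ρ (σ' j))) := by
          refine Finset.prod_congr rfl fun j _ => ?_
          have hmm : ρ (σ' j) = σ j := by
            rw [hρdef]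
            simp [Equiv.Perm.mul_apply, Equiv.Perm.inv_apply_self]
          rw [hmm]
        _ = ∏ j, typeCount ((eρ pt).1 j) ((eρ pt).2.1 j) (fiber a' j) ((eρ pt).2.2 j) :=
          Equiv.prod_comp σ'
            (fun j => typeCount ((eρ pt).1 j) ((eρ pt).2.1 j) (fiber a' j) ((eρ pt).2.2 j))
    · simp only [wcount, if_neg hg, if_neg (fun h => hg ((hGoodIff pt).mp h))]
  rw [finsum_congr hkey]
  exact finsum_comp_equiv eρ

end Reg

section Rest
variable {Ω : Type*} {k : ℕ}

lemma wreath_sizes [Finite Ω] (S : Set (Set (Set Ω))) (hS : IsSAS S)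
    (G : Subgroup (Equiv.Perm (Fin k))) :
    ∀ A ∈ wreath S G, ∀ a ∈ A, ∀ a' ∈ A, Set.ncard a = Set.ncard a' := by
  rintro A ⟨α, hα, rfl⟩ a ha a' ha'
  obtain ⟨σ, hσ, hfa⟩ := ha
  obtain ⟨σ', hσ', hfa'⟩ := ha'
  rw [ncard_eq_sum_fibers a, ncard_eq_sum_fibers a',
    ← Equiv.sum_comp σ (fun j => (fiber a j).ncard),
    ← Equiv.sum_comp σ' (fun j => (fiber a' j).ncard)]
  refine Finset.sum_congr rfl fun j _ => ?_
  have h1 : fiber a (σ j) ∈ α j := by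
    have := hfa (σ j); rwa [Equiv.Perm.inv_apply_self] at this
  have h2 : fiber a' (σ' j) ∈ α j := by
    have := hfa' (σ' j); rwa [Equiv.Perm.inv_apply_self] at this
  exact hS.2.1 (α j) (hα j) _ h1 _ h2

noncomputable def basePoint (α : Fin k → Set (Set Ω)) (hne : ∀ j, (α j).Nonempty) :
    Set (Ω × Fin k) := {z | z.1 ∈ (hne z.2).choose}

lemma basePoint_fiber_mem (α : Fin k → Set (Set Ω)) (hne : ∀ j, (α j).Nonempty) (j : Fin k) :
    fiber (basePoint α hne) j ∈ α j := by
  have h : fiber (basePoint α hne) j = (hne j).choose := Set.setOf_mem_eq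
  rw [h]
  exact (hne j).choose_spec

lemma cellW_mem_self (S : Set (Set (Set Ω))) (hS : IsSAS S) (G : Subgroup (Equiv.Perm (Fin k)))
    (α : Fin k → Set (Set Ω)) (hα : ∀ j, α j ∈ S) :
    basePoint α (fun j => cell_nonempty hS.1 (hα j)) ∈
      {s : Set (Ω × Fin k) | ∃ π ∈ G, ∀ j, fiber s j ∈ α (π⁻¹ j)} := by
  refine ⟨1, one_mem G, fun j => ?_⟩
  have h1 : ((1 : Equiv.Perm (Fin k))⁻¹ j) = j := by simp
  rw [h1]
  exact basePoint_fiber_mem α _ j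

lemma wreath_partition [Finite Ω] (S : Set (Set (Set Ω))) (hS : IsSAS S)
    (G : Subgroup (Equiv.Perm (Fin k))) : Setoid.IsPartition (wreath S G) := by
  constructor
  · rintro ⟨α, hα, hemp⟩
    have := cellW_mem_self S hS G α hα
    rw [← hemp] at this
    exact this
  · intro s
    refine ⟨{u : Set (Ω × Fin k) | ∃ π ∈ G, ∀ j, fiber u j ∈ cellOf hS.1 (fiber s (π⁻¹ j))},
      ⟨⟨fun j => cellOf hS.1 (fiber s j), fun j => cellOf_mem hS.1 _, rfl⟩, ?_⟩, ?_⟩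
    · refine ⟨1, one_mem G, fun j => ?_⟩
      simp only [inv_one, Equiv.Perm.one_apply]
      exact mem_cellOf hS.1 _
    · rintro y ⟨⟨α', hα', rfl⟩, hs⟩
      obtain ⟨π, hπ, hf⟩ := hs
      have hcell : ∀ j, α' (π⁻¹ j) = cellOf hS.1 (fiber s j) :=
        fun j => cellOf_eq hS.1 (hα' _) (hf j)
      ext u
      constructor
      · rintro ⟨ρ, hρ, hu⟩
        refine ⟨ρ * π⁻¹, mul_mem hρ (inv_mem hπ), fun j => ?_⟩
        have h2 : cellOf hS.1 (fiber s ((ρ * π⁻¹)⁻¹ j)) = α' (ρ⁻¹ j) := by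
          rw [← hcell ((ρ * π⁻¹)⁻¹ j)]
          congr 1
          rw [mul_inv_rev, inv_inv]
          simp [Equiv.Perm.mul_apply, Equiv.Perm.inv_apply_self]
        rw [h2]
        exact hu j
      · rintro ⟨ρ, hρ, hu⟩
        refine ⟨ρ * π, mul_mem hρ hπ, fun j => ?_⟩
        have h2 : α' ((ρ * π)⁻¹ j) = cellOf hS.1 (fiber s (ρ⁻¹ j)) := by
          rw [← hcell (ρ⁻¹ j)]
          congr 1
        rw [h2]
        exact hu j

lemma ncard_range_eq {A B C' : Type*} (F : A → B) (Gf : A → C')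
    (h : ∀ x y, F x = F y ↔ Gf x = Gf y) : (Set.range F).ncard = (Set.range Gf).ncard := by
  rw [← Nat.card_coe_set_eq, ← Nat.card_coe_set_eq]
  apply Nat.card_congr
  refine Equiv.ofBijective (fun x => ⟨Gf x.2.choose, Set.mem_range_self _⟩) ⟨?_, ?_⟩
  · rintro x y hxy
    rw [Subtype.mk.injEq] at hxy
    have h1 : F x.2.choose = F y.2.choose := (h _ _).mpr hxy
    rw [x.2.choose_spec, y.2.choose_spec] at h1
    exact Subtype.ext h1
  · rintro ⟨y, a, ha⟩
    refine ⟨⟨F a, Set.mem_range_self a⟩, ?_⟩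
    have h1 : Gf (Set.mem_range_self (f := F) a).choose = Gf a :=
      (h _ _).mp (Set.mem_range_self (f := F) a).choose_spec
    exact Subtype.ext (h1.trans ha)

end Rest

section Rank
variable {Ω : Type*} {k : ℕ}

lemma wreath_rank [Finite Ω] (S : Set (Set (Set Ω))) (hS : IsSAS S)
    (G : Subgroup (Equiv.Perm (Fin k))) :
    (wreath S G).ncard =
      {O : Set (Fin k → Fin S.ncard) | ∃ f : Fin k → Fin S.ncard,
        O = {f' : Fin k → Fin S.ncard | ∃ π ∈ G, ∀ j, f' j = f (π⁻¹ j)}}.ncard := by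
  classical
  have e : Fin S.ncard ≃ ↥S := (Finite.equivFinOfCardEq (Nat.card_coe_set_eq S)).symm
  set Φ : (Fin k → Fin S.ncard) → Set (Set (Ω × Fin k)) := fun f =>
    {s | ∃ π ∈ G, ∀ j, fiber s j ∈ (e (f (π⁻¹ j)) : Set (Set Ω))} with hΦ
  set Ψ : (Fin k → Fin S.ncard) → Set (Fin k → Fin S.ncard) := fun f =>
    {f' | ∃ π ∈ G, ∀ j, f' j = f (π⁻¹ j)} with hΨ
  have h1 : wreath S G = Set.range Φ := by
    ext c
    constructor
    · rintro ⟨α, hα, rfl⟩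
      refine ⟨fun j => e.symm ⟨α j, hα j⟩, ?_⟩
      have hcoe : ∀ j, ((e (e.symm ⟨α j, hα j⟩)) : Set (Set Ω)) = α j := by
        intro j; rw [e.apply_symm_apply]
      ext s
      constructor
      · rintro ⟨π, hπ, hf⟩
        exact ⟨π, hπ, fun j => (hcoe (π⁻¹ j)) ▸ hf j⟩
      · rintro ⟨π, hπ, hf⟩
        exact ⟨π, hπ, fun j => (hcoe (π⁻¹ j)).symm ▸ hf j⟩
    · rintro ⟨f, rfl⟩
      exact ⟨fun j => ↑(e (f j)), fun j => (e (f j)).2, rfl⟩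
  have h2 : {O : Set (Fin k → Fin S.ncard) | ∃ f : Fin k → Fin S.ncard,
      O = {f' : Fin k → Fin S.ncard | ∃ π ∈ G, ∀ j, f' j = f (π⁻¹ j)}} = Set.range Ψ := by
    ext O
    exact ⟨fun ⟨f, hf⟩ => ⟨f, hf.symm⟩, fun ⟨f, hf⟩ => ⟨f, hf.symm⟩⟩
  rw [h1, h2]
  apply ncard_range_eq
  intro f g
  constructor
  · intro hΦfg
    set α : Fin k → Set (Set Ω) := fun j => ↑(e (f j)) with hαdef
    have hne : ∀ j, (α j).Nonempty := fun j => cell_nonempty hS.1 (e (f j)).2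
    set s := basePoint α hne with hsdef
    have hsf : s ∈ Φ f := ⟨1, one_mem G, fun j => by
      simp only [inv_one, Equiv.Perm.one_apply]
      exact basePoint_fiber_mem α hne j⟩
    rw [hΦfg] at hsf
    obtain ⟨π, hπ, hmem⟩ := hsf
    have hfg : ∀ j, g (π⁻¹ j) = f j := by
      intro j
      have hm1 : fiber s j ∈ (e (g (π⁻¹ j)) : Set (Set Ω)) := hmem j
      have hm2 : fiber s j ∈ (e (f j) : Set (Set Ω)) := basePoint_fiber_mem α hne j
      have h3 := (cellOf_eq hS.1 (e (g (π⁻¹ j))).2 hm1).trans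
        (cellOf_eq hS.1 (e (f j)).2 hm2).symm
      exact e.injective (Subtype.ext h3)
    ext f'
    constructor
    · rintro ⟨ρ, hρ, h⟩
      refine ⟨ρ * π, mul_mem hρ hπ, fun j => ?_⟩
      rw [mul_inv_rev, Equiv.Perm.mul_apply, hfg (ρ⁻¹ j)]
      exact h j
    · rintro ⟨ρ, hρ, h⟩
      refine ⟨ρ * π⁻¹, mul_mem hρ (inv_mem hπ), fun j => ?_⟩
      have h3 := hfg (π (ρ⁻¹ j))
      rw [Equiv.Perm.inv_apply_self] at h3
      rw [mul_inv_rev, inv_inv, Equiv.Perm.mul_apply, ← h3]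
      exact h j
  · intro hΨfg
    have hfΨ : f ∈ Ψ f := ⟨1, one_mem G, fun j => by simp⟩
    rw [hΨfg] at hfΨ
    obtain ⟨π, hπ, hfg⟩ := hfΨ
    ext s
    constructor
    · rintro ⟨ρ, hρ, h⟩
      refine ⟨ρ * π, mul_mem hρ hπ, fun j => ?_⟩
      rw [mul_inv_rev, Equiv.Perm.mul_apply, ← hfg (ρ⁻¹ j)]
      exact h j
    · rintro ⟨ρ, hρ, h⟩
      refine ⟨ρ * π⁻¹, mul_mem hρ (inv_mem hπ), fun j => ?_⟩
      have h3 : g (ρ⁻¹ j) = f (π (ρ⁻¹ j)) := by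
        have h4 := hfg (π (ρ⁻¹ j))
        rw [Equiv.Perm.inv_apply_self] at h4
        exact h4.symm
      rw [mul_inv_rev, inv_inv, Equiv.Perm.mul_apply, ← h3]
      exact h j

end Rank

theorem stmt10 {Ω : Type*} [Finite Ω] (S : Set (Set (Set Ω))) (hS : IsSAS S)
    (k : ℕ) (hk : 1 ≤ k) (G : Subgroup (Equiv.Perm (Fin k))) :
    IsSAS (wreath S G) ∧
    (wreath S G).ncard =
      {O : Set (Fin k → Fin S.ncard) | ∃ f : Fin k → Fin S.ncard,
        O = {f' : Fin k → Fin S.ncard | ∃ π ∈ G, ∀ j, f' j = f (π⁻¹ j)}}.ncard :=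
  ⟨⟨wreath_partition S hS G, wreath_sizes S hS G, wreath_regular S hS G⟩, wreath_rank S hS G⟩

end Paper
end

section
/- Let 𝔖 be a set association scheme of rank r on a finite set Ω and let G be a subgroup of Sym(k), k ≥ 1. Let Ḡ be the subgroup of Sym(k) consisting of all permutations preserving every orbit of G on [r]^k; then G ≤ Ḡ and Aut(𝔖 ≀ G) = Aut(𝔖) ≀ Ḡ, i.e., a permutation g of Ω × [k] preserves every cell of 𝔖 ≀ G if and only if there exist π ∈ Ḡ and f_1, …, f_k ∈ Aut(𝔖) such that g(ω, j) = (f_j(ω), π(j)) for all (ω, j) ∈ Ω × [k]. -/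
namespace Paper


def setAutGroup {Ω : Type*} (S : Set (Set (Set Ω))) : Subgroup (Equiv.Perm Ω) where
  carrier := {π | ∀ α ∈ S, ∀ a : Set Ω, a ∈ α ↔ ⇑π '' a ∈ α}
  one_mem' := by intro α hα a; simp
  mul_mem' := by
    intro g h hg hh α hα a
    have h1 : ⇑(g * h) '' a = ⇑g '' (⇑h '' a) := by
      rw [Equiv.Perm.coe_mul, Set.image_comp]
    rw [h1]
    exact (hh α hα a).trans (hg α hα (⇑h '' a))
  inv_mem' := by
    intro g hg α hα a
    have h0 := hg α hα (⇑g⁻¹ '' a)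
    have h2 : ⇑g '' (⇑g⁻¹ '' a) = a := by
      simp [← Set.image_comp]
    rw [h2] at h0
    exact h0.symm

def SetSchurian {Ω : Type*} (S : Set (Set (Set Ω))) : Prop :=
  S = Set.range (fun a : Set Ω => {b : Set Ω | ∃ π ∈ setAutGroup S, b = ⇑π '' a})

def GbarSet {Ω : Type*} (S : Set (Set (Set Ω))) {k : ℕ} (G : Subgroup (Equiv.Perm (Fin k))) :
    Set (Equiv.Perm (Fin k)) :=
  {σ | ∀ f : Fin k → Set (Set Ω), (∀ j, f j ∈ S) → ∃ π ∈ G, ∀ j, f (σ⁻¹ j) = f (π⁻¹ j)}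

section Aux2

variable {Ω : Type*}

lemma fiber_ext' {k : ℕ} {s t : Set (Ω × Fin k)}
    (h : ∀ j, fiber s j = fiber t j) : s = t := by
  ext ⟨ω, j⟩
  exact Set.ext_iff.mp (h j) ω

lemma fiber_image {k : ℕ} {g : Equiv.Perm (Ω × Fin k)} {π : Equiv.Perm (Fin k)}
    {f : Fin k → Equiv.Perm Ω} (hg : ∀ ω j, g (ω, j) = (f j ω, π j))
    (s : Set (Ω × Fin k)) (j : Fin k) :
    fiber (⇑g '' s) j = ⇑(f (π⁻¹ j)) '' fiber s (π⁻¹ j) := by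
  ext ω
  constructor
  · rintro ⟨⟨ω', j'⟩, hmem, heq⟩
    rw [hg] at heq
    have h2 : π j' = j := congrArg Prod.snd heq
    have h1 : f j' ω' = ω := congrArg Prod.fst heq
    have hj' : j' = π⁻¹ j := by rw [← h2]; simp
    subst hj'
    exact ⟨ω', hmem, h1⟩
  · rintro ⟨ω', hmem, h1⟩
    refine ⟨(ω', π⁻¹ j), hmem, ?_⟩
    rw [hg, h1]
    simp

lemma cell_unique {S : Set (Set (Set Ω))} (hS : Setoid.IsPartition S)
    {β γ : Set (Set Ω)} (hβ : β ∈ S) (hγ : γ ∈ S) {a : Set Ω}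
    (haβ : a ∈ β) (haγ : a ∈ γ) : β = γ := by
  obtain ⟨δ, _, huniq⟩ := hS.2 a
  rw [huniq β ⟨hβ, haβ⟩, huniq γ ⟨hγ, haγ⟩]

lemma empty_cell_eq [Finite Ω] {S : Set (Set (Set Ω))} (hS : IsSAS S)
    {β : Set (Set Ω)} (hβ : β ∈ S) (h : (∅ : Set Ω) ∈ β) : β = {∅} := by
  ext b
  simp only [Set.mem_singleton_iff]
  constructor
  · intro hb
    have hcard := hS.2.1 β hβ b hb ∅ h
    rw [Set.ncard_empty] at hcard
    exact (Set.ncard_eq_zero (Set.toFinite b)).mp hcard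
  · rintro rfl; exact h

lemma empty_cell_mem [Finite Ω] {S : Set (Set (Set Ω))} (hS : IsSAS S) :
    {(∅ : Set Ω)} ∈ S := by
  obtain ⟨β, ⟨hβS, hβ⟩, -⟩ := hS.1.2 ∅
  rw [← empty_cell_eq hS hβS hβ]; exact hβS

lemma univ_cell_eq [Finite Ω] {S : Set (Set (Set Ω))} (hS : IsSAS S)
    {β : Set (Set Ω)} (hβ : β ∈ S) (h : (Set.univ : Set Ω) ∈ β) : β = {Set.univ} := by
  ext b
  simp only [Set.mem_singleton_iff]
  constructor
  · intro hb
    have hcard := hS.2.1 β hβ b hb Set.univ h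
    exact (Set.eq_of_subset_of_ncard_le (Set.subset_univ b) (le_of_eq hcard.symm)
      (Set.toFinite _))
  · rintro rfl; exact h

lemma univ_cell_mem [Finite Ω] {S : Set (Set (Set Ω))} (hS : IsSAS S) :
    {(Set.univ : Set Ω)} ∈ S := by
  obtain ⟨β, ⟨hβS, hβ⟩, -⟩ := hS.1.2 Set.univ
  rw [← univ_cell_eq hS hβS hβ]; exact hβS

lemma gbar_inv [Finite Ω] {S : Set (Set (Set Ω))} {k : ℕ} {G : Subgroup (Equiv.Perm (Fin k))}
    {σ : Equiv.Perm (Fin k)} (hσ : σ ∈ GbarSet S G) : σ⁻¹ ∈ GbarSet S G := by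
  classical
  intro f hf
  set Φ : (Fin k → Set (Set Ω)) → (Fin k → Set (Set Ω)) :=
    fun h => fun j => h (σ⁻¹ j) with hΦ
  set O : Set (Fin k → Set (Set Ω)) := {h | ∃ π ∈ G, h = fun j => f (π⁻¹ j)} with hO
  have hmaps : Set.MapsTo Φ O O := by
    rintro h ⟨π, hπ, rfl⟩
    obtain ⟨ρ, hρ, hρeq⟩ := hσ (fun j => f (π⁻¹ j)) (fun j => hf _)
    refine ⟨ρ * π, mul_mem hρ hπ, ?_⟩
    funext j
    simpa [hΦ] using hρeq j
  have hinj : Set.InjOn Φ O := by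
    intro h1 _ h2 _ heq
    funext j
    have := congrFun heq (σ j)
    simpa [hΦ] using this
  have hfin : O.Finite := Set.toFinite O
  have hsurj : Set.SurjOn Φ O O :=
    ((hfin.injOn_iff_bijOn_of_mapsTo hmaps).mp hinj).surjOn
  have hfO : f ∈ O := ⟨1, one_mem G, by funext j; simp⟩
  obtain ⟨h, hhO, hh⟩ := hsurj hfO
  obtain ⟨ρ, hρ, rfl⟩ := hhO
  refine ⟨ρ, hρ, fun j => ?_⟩
  have h5 := congrFun hh (σ j)
  simp only [hΦ, (Equiv.Perm.inv_eq_iff_eq.mpr rfl : σ⁻¹ (σ j) = j)] at h5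
  simpa using h5.symm

end Aux2
theorem stmt11 {Ω : Type*} [Finite Ω] (S : Set (Set (Set Ω))) (hS : IsSAS S)
    (k : ℕ) (hk : 1 ≤ k) (G : Subgroup (Equiv.Perm (Fin k))) :
    (∀ π ∈ G, π ∈ GbarSet S G) ∧
    (∀ g : Equiv.Perm (Ω × Fin k),
      g ∈ setAutGroup (wreath S G) ↔
      ∃ π ∈ GbarSet S G, ∃ f : Fin k → Equiv.Perm Ω,
        (∀ j, f j ∈ setAutGroup S) ∧ ∀ (ω : Ω) (j : Fin k), g (ω, j) = (f j ω, π j)) := by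
  classical
  have part1 : ∀ π ∈ G, π ∈ GbarSet S G := fun π hπ f hf => ⟨π, hπ, fun j => rfl⟩
  refine ⟨part1, fun g => ⟨?_, ?_⟩⟩
  · -- forward (hard) direction
    intro hg
    rcases isEmpty_or_nonempty Ω with hemp | hne
    · exact ⟨1, part1 1 (one_mem G), fun _ => 1, fun j => one_mem _,
        fun ω j => (IsEmpty.false ω).elim⟩
    · -- Ω nonempty
      set Tcell : (Fin k → Set (Set Ω)) → Set (Set (Ω × Fin k)) :=
        fun α => {s : Set (Ω × Fin k) | ∃ π ∈ G, ∀ j, fiber s j ∈ α (π⁻¹ j)} with hTcell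
      have hTw : ∀ α : Fin k → Set (Set Ω), (∀ j, α j ∈ S) → Tcell α ∈ wreath S G :=
        fun α hα => ⟨α, hα, rfl⟩
      -- full fibers
      set e : Fin k → Set (Ω × Fin k) := fun j => {p | p.2 = j} with he
      have hefib : ∀ j₀ j, fiber (e j₀) j = if j = j₀ then Set.univ else ∅ := by
        intro j₀ j
        by_cases h : j = j₀
        · subst h; simp only [if_pos rfl]
          exact Set.eq_univ_of_forall fun ω => rfl
        · rw [if_neg h]
          exact Set.eq_empty_iff_forall_notMem.mpr fun ω hω => h hω
      have hfull : ∀ j₀, ∃ j₁, ⇑g '' (e j₀) = e j₁ := by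
        intro j₀
        set α₀ : Fin k → Set (Set Ω) :=
          fun j => if j = j₀ then {Set.univ} else {∅} with hα₀
        have hα₀S : ∀ j, α₀ j ∈ S := by
          intro j
          simp only [hα₀]
          split_ifs
          · exact univ_cell_mem hS
          · exact empty_cell_mem hS
        have hmem : e j₀ ∈ Tcell α₀ := by
          refine ⟨1, one_mem G, fun j => ?_⟩
          rw [show ((1 : Equiv.Perm (Fin k))⁻¹ j) = j from rfl, hefib]
          simp only [hα₀]
          split_ifs <;> rfl
        have hmem' := (hg (Tcell α₀) (hTw α₀ hα₀S) (e j₀)).mp hmem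
        obtain ⟨ρ, hρ, hfib⟩ := hmem'
        refine ⟨ρ j₀, fiber_ext' fun j => ?_⟩
        have h1 := hfib j
        rw [hefib]
        by_cases h : j = ρ j₀
        · rw [if_pos h]
          have h2 : ρ⁻¹ j = j₀ := by rw [h]; simp
          rw [h2] at h1
          simp only [hα₀, if_pos rfl, Set.mem_singleton_iff] at h1
          exact h1
        · rw [if_neg h]
          have h2 : ρ⁻¹ j ≠ j₀ := fun hc => h (by rw [← hc]; simp)
          simp only [hα₀, if_neg h2, Set.mem_singleton_iff] at h1
          exact h1
      choose π₀ hπ₀ using hfull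
      have heinj : Function.Injective e := by
        intro j j' hjj
        obtain ⟨ω⟩ := hne
        have : (ω, j) ∈ e j' := by rw [← hjj]; exact rfl
        exact this
      have hπ₀inj : Function.Injective π₀ := by
        intro j j' hjj
        apply heinj
        apply Set.image_injective.mpr g.injective
        rw [hπ₀ j, hπ₀ j', hjj]
      set π : Equiv.Perm (Fin k) :=
        Equiv.ofBijective π₀ (Finite.injective_iff_bijective.mp hπ₀inj) with hπdef
      have hπapp : ∀ j, π j = π₀ j := fun j => rfl
      have hsnd : ∀ (ω : Ω) (j : Fin k), (g (ω, j)).2 = π₀ j := by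
        intro ω j
        have : g (ω, j) ∈ e (π₀ j) := by
          rw [← hπ₀ j]
          exact ⟨(ω, j), rfl, rfl⟩
        exact this
      set f0 : Fin k → Ω → Ω := fun j ω => (g (ω, j)).1 with hf0
      have hf0inj : ∀ j, Function.Injective (f0 j) := by
        intro j ω ω' hωω
        have h1 : g (ω, j) = g (ω', j) := by
          have e2 : (g (ω, j)).2 = (g (ω', j)).2 := by rw [hsnd, hsnd]
          exact Prod.ext hωω e2
        have := g.injective h1
        exact congrArg Prod.fst this
      set f : Fin k → Equiv.Perm Ω :=
        fun j => Equiv.ofBijective (f0 j) (Finite.injective_iff_bijective.mp (hf0inj j))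
        with hfdef
      have hform : ∀ (ω : Ω) (j : Fin k), g (ω, j) = (f j ω, π j) :=
        fun ω j => Prod.ext rfl (hsnd ω j)
      -- key lemma: f j maps each cell into itself
      have hK : ∀ (j : Fin k) (a : Set Ω) (β : Set (Set Ω)), β ∈ S → a ∈ β →
          ⇑(f j) '' a ∈ β := by
        intro j a β hβ haβ
        set α : Fin k → Set (Set Ω) := fun j' => if j' = j then β else {∅} with hα
        have hαS : ∀ j', α j' ∈ S := by
          intro j'
          simp only [hα]
          split_ifs
          · exact hβ
          · exact empty_cell_mem hS
        set s : Set (Ω × Fin k) := {p | p.2 = j ∧ p.1 ∈ a} with hsdef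
        have hsfib : ∀ j', fiber s j' = if j' = j then a else ∅ := by
          intro j'
          by_cases h : j' = j
          · subst h
            rw [if_pos rfl]
            ext ω
            exact ⟨fun hω => hω.2, fun hω => ⟨rfl, hω⟩⟩
          · rw [if_neg h]
            exact Set.eq_empty_iff_forall_notMem.mpr fun ω hω => h hω.1
        have hs : s ∈ Tcell α := by
          refine ⟨1, one_mem G, fun j' => ?_⟩
          rw [show ((1 : Equiv.Perm (Fin k))⁻¹ j') = j' from rfl, hsfib]
          simp only [hα]
          split_ifs
          · exact haβ
          · rfl
        obtain ⟨ρ, hρ, hfib⟩ := (hg (Tcell α) (hTw α hαS) s).mp hs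
        have h1 := hfib (π j)
        rw [fiber_image hform, (Equiv.Perm.inv_eq_iff_eq.mpr rfl : π⁻¹ (π j) = j), hsfib, if_pos rfl] at h1
        by_cases hcase : ρ⁻¹ (π j) = j
        · rw [hcase] at h1
          simpa only [hα, if_pos rfl] using h1
        · simp only [hα, if_neg hcase, Set.mem_singleton_iff, Set.image_eq_empty] at h1
          subst h1
          simpa using haβ
      have hfmem : ∀ j, f j ∈ setAutGroup S := by
        intro j β hβ a
        constructor
        · exact hK j a β hβ
        · intro him
          obtain ⟨γ, ⟨hγS, haγ⟩, -⟩ := hS.1.2 a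
          have h2 := hK j a γ hγS haγ
          have h3 := cell_unique hS.1 hβ hγS him h2
          rw [h3]
          exact haγ
      have hπbar : π ∈ GbarSet S G := by
        intro fα hfα
        have hnonemp : ∀ j, ∃ a, a ∈ fα j := by
          intro j
          rcases Set.eq_empty_or_nonempty (fα j) with h | h
          · exact absurd (h ▸ hfα j) hS.1.1
          · exact h
        choose a ha using hnonemp
        set s : Set (Ω × Fin k) := {p | p.1 ∈ a p.2} with hsdef
        have hsfib : ∀ j, fiber s j = a j := fun j => rfl
        have hs : s ∈ Tcell fα := by
          refine ⟨1, one_mem G, fun j => ?_⟩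
          rw [show ((1 : Equiv.Perm (Fin k))⁻¹ j) = j from rfl, hsfib]
          exact ha j
        obtain ⟨ρ, hρ, hfib⟩ := (hg (Tcell fα) (hTw fα hfα) s).mp hs
        refine ⟨ρ, hρ, fun j => ?_⟩
        have h1 := hfib j
        rw [fiber_image hform, hsfib] at h1
        have h2 : ⇑(f (π⁻¹ j)) '' a (π⁻¹ j) ∈ fα (π⁻¹ j) :=
          hK (π⁻¹ j) _ _ (hfα _) (ha _)
        exact cell_unique hS.1 (hfα _) (hfα _) h2 h1
      exact ⟨π, hπbar, f, hfmem, hform⟩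
  · -- easy direction
    rintro ⟨π, hπ, f, hf, hgf⟩
    have hπinv := gbar_inv hπ
    intro c hc s
    obtain ⟨α, hα, rfl⟩ := hc
    constructor
    · rintro ⟨ρ, hρ, hfib⟩
      obtain ⟨τ, hτ, hτeq⟩ := hπ (fun j => α (ρ⁻¹ j)) (fun j => hα _)
      refine ⟨τ * ρ, mul_mem hτ hρ, fun j => ?_⟩
      rw [fiber_image hgf]
      have h1 : fiber s (π⁻¹ j) ∈ α (ρ⁻¹ (π⁻¹ j)) := hfib (π⁻¹ j)
      have h3 : ⇑(f (π⁻¹ j)) '' fiber s (π⁻¹ j) ∈ α (ρ⁻¹ (π⁻¹ j)) :=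
        ((hf (π⁻¹ j)) (α (ρ⁻¹ (π⁻¹ j))) (hα _) (fiber s (π⁻¹ j))).mp h1
      have h4 : α (ρ⁻¹ (π⁻¹ j)) = α (ρ⁻¹ (τ⁻¹ j)) := hτeq j
      have h5 : ((τ * ρ)⁻¹ : Equiv.Perm (Fin k)) j = ρ⁻¹ (τ⁻¹ j) := by
        simp [mul_inv_rev]
      rw [h5, ← h4]
      exact h3
    · rintro ⟨ρ, hρ, hfib⟩
      have hfib' : ∀ j, fiber s (π⁻¹ j) ∈ α (ρ⁻¹ j) := by
        intro j
        have h1 := hfib j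
        rw [fiber_image hgf] at h1
        exact ((hf (π⁻¹ j)) (α (ρ⁻¹ j)) (hα _) (fiber s (π⁻¹ j))).mpr h1
      obtain ⟨τ, hτ, hτeq⟩ := hπinv (fun j => α (ρ⁻¹ j)) (fun j => hα _)
      refine ⟨τ * ρ, mul_mem hτ hρ, fun j => ?_⟩
      have h1 := hfib' (π j)
      rw [(Equiv.Perm.inv_eq_iff_eq.mpr rfl : π⁻¹ (π j) = j)] at h1
      have h4 : α (ρ⁻¹ ((π⁻¹)⁻¹ j)) = α (ρ⁻¹ (τ⁻¹ j)) := hτeq j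
      rw [inv_inv] at h4
      have h5 : ((τ * ρ)⁻¹ : Equiv.Perm (Fin k)) j = ρ⁻¹ (τ⁻¹ j) := by
        simp [mul_inv_rev]
      rw [h5, ← h4]
      exact h1

end Paper
end

section
/- Let m ≥ 2k > 0 and let a, b, c ∈ {0, 1, …, k}. Let u, v be k-element subsets of [m] with |u \ v| = a. Then there exists a k-element subset w of [m] with |u \ w| = b and |w \ v| = c if and only if a ≤ b + c, b ≤ a + c, c ≤ a + b, and a + b + c ≤ m. -/
namespace Paper


theorem stmt15 (m k : ℕ) (hk : 0 < k) (hmk : 2 * k ≤ m)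
    (a b c : ℕ) (ha : a ≤ k) (hb : b ≤ k) (hc : c ≤ k)
    (u v : Finset (Fin m)) (hu : u.card = k) (hv : v.card = k)
    (huv : (u \ v).card = a) :
    (∃ w : Finset (Fin m), w.card = k ∧ (u \ w).card = b ∧ (w \ v).card = c) ↔
    (a ≤ b + c ∧ b ≤ a + c ∧ c ≤ a + b ∧ a + b + c ≤ m) := by
  have hvu : (v \ u).card = a := by
    rw [Finset.card_sdiff_comm (by rw [hv, hu])]; exact huv
  constructor
  · rintro ⟨w, hw, hub, hwc⟩
    have hwu : (w \ u).card = b := by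
      rw [Finset.card_sdiff_comm (by rw [hw, hu])]; exact hub
    have c1 : a ≤ b + c := by
      have h1 : u \ v ⊆ (u \ w) ∪ (w \ v) := by
        intro x hx
        simp only [Finset.mem_sdiff, Finset.mem_union] at *
        tauto
      calc a = (u \ v).card := huv.symm
        _ ≤ ((u \ w) ∪ (w \ v)).card := Finset.card_le_card h1
        _ ≤ (u \ w).card + (w \ v).card := Finset.card_union_le _ _
        _ = b + c := by rw [hub, hwc]
    have c2 : b ≤ a + c := by
      have h2 : w \ u ⊆ (w \ v) ∪ (v \ u) := by
        intro x hx
        simp only [Finset.mem_sdiff, Finset.mem_union] at *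
        tauto
      calc b = (w \ u).card := hwu.symm
        _ ≤ ((w \ v) ∪ (v \ u)).card := Finset.card_le_card h2
        _ ≤ (w \ v).card + (v \ u).card := Finset.card_union_le _ _
        _ = c + a := by rw [hwc, hvu]
        _ = a + c := by omega
    have c3 : c ≤ a + b := by
      have h3 : w \ v ⊆ (w \ u) ∪ (u \ v) := by
        intro x hx
        simp only [Finset.mem_sdiff, Finset.mem_union] at *
        tauto
      calc c = (w \ v).card := hwc.symm
        _ ≤ ((w \ u) ∪ (u \ v)).card := Finset.card_le_card h3
        _ ≤ (w \ u).card + (u \ v).card := Finset.card_union_le _ _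
        _ = b + a := by rw [hwu, huv]
        _ = a + b := by omega
    have d1 : Disjoint (v \ u) (u \ w) := by
      rw [Finset.disjoint_left]
      intro x hx hx'
      simp only [Finset.mem_sdiff] at *
      tauto
    have d2 : Disjoint (v \ u) (w \ v) := by
      rw [Finset.disjoint_left]
      intro x hx hx'
      simp only [Finset.mem_sdiff] at *
      tauto
    have d3 : Disjoint (u \ w) (w \ v) := by
      rw [Finset.disjoint_left]
      intro x hx hx'
      simp only [Finset.mem_sdiff] at *
      tauto
    have e1 : ((v \ u) ∪ (u \ w)).card = a + b := by
      rw [Finset.card_union_of_disjoint d1, hvu, hub]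
    have e2 : (((v \ u) ∪ (u \ w)) ∪ (w \ v)).card = a + b + c := by
      rw [Finset.card_union_of_disjoint (Finset.disjoint_union_left.mpr ⟨d2, d3⟩),
        e1, hwc]
    have e3 := Finset.card_le_univ (((v \ u) ∪ (u \ w)) ∪ (w \ v))
    rw [Fintype.card_fin] at e3
    rw [e2] at e3
    exact ⟨c1, c2, c3, e3⟩
  · rintro ⟨c1, c2, c3, c4⟩
    -- cardinalities of the Venn regions of u and v
    have hI : (u ∩ v).card = k - a := by
      have := Finset.card_sdiff_add_card_inter u v
      omega
    have hUV : (u ∪ v).card = k + a := by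
      have := Finset.card_sdiff_add_card v u
      rw [hvu, hu, Finset.union_comm] at this
      omega
    have hO : ((u ∪ v)ᶜ).card = m - (k + a) := by
      rw [Finset.card_compl, hUV, Fintype.card_fin]
    -- choose the size of w inside u ∩ v
    obtain ⟨i, hi1, hi2, hi3, hi4, hi5, hi6, hi7⟩ :
        ∃ i : ℕ, k ≤ i + a + b ∧ k ≤ i + a + c ∧ k ≤ i + b + c ∧
          i + a ≤ k ∧ i + b ≤ k ∧ i + c ≤ k ∧ i + a + b + c ≤ m := by
      refine ⟨(k - a - b).max ((k - a - c).max (k - b - c)), ?_⟩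
      simp only [Nat.max_def]
      split_ifs <;> omega
    obtain ⟨tI, htIs, htIc⟩ := Finset.exists_subset_card_eq (s := u ∩ v) (n := i) (by rw [hI]; omega)
    obtain ⟨tA, htAs, htAc⟩ := Finset.exists_subset_card_eq (s := u \ v) (n := k - b - i)
      (by rw [huv]; omega)
    obtain ⟨tB, htBs, htBc⟩ := Finset.exists_subset_card_eq (s := v \ u) (n := k - c - i)
      (by rw [hvu]; omega)
    obtain ⟨tO, htOs, htOc⟩ := Finset.exists_subset_card_eq (s := (u ∪ v)ᶜ) (n := i + b + c - k)
      (by rw [hO]; omega)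
    -- pointwise membership facts
    have mI : ∀ x, x ∈ tI → x ∈ u ∧ x ∈ v := fun x hx => Finset.mem_inter.mp (htIs hx)
    have mA : ∀ x, x ∈ tA → x ∈ u ∧ x ∉ v := fun x hx => Finset.mem_sdiff.mp (htAs hx)
    have mB : ∀ x, x ∈ tB → x ∈ v ∧ x ∉ u := fun x hx => Finset.mem_sdiff.mp (htBs hx)
    have mO : ∀ x, x ∈ tO → x ∉ u ∧ x ∉ v := fun x hx => by
      have := htOs hx
      simp only [Finset.mem_compl, Finset.mem_union] at this
      tauto
    have dIA : Disjoint tI tA := by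
      rw [Finset.disjoint_left]; intro x hx hx'
      have := mI x hx; have := mA x hx'; tauto
    have dIB : Disjoint tI tB := by
      rw [Finset.disjoint_left]; intro x hx hx'
      have := mI x hx; have := mB x hx'; tauto
    have dIO : Disjoint tI tO := by
      rw [Finset.disjoint_left]; intro x hx hx'
      have := mI x hx; have := mO x hx'; tauto
    have dAB : Disjoint tA tB := by
      rw [Finset.disjoint_left]; intro x hx hx'
      have := mA x hx; have := mB x hx'; tauto
    have dAO : Disjoint tA tO := by
      rw [Finset.disjoint_left]; intro x hx hx'
      have := mA x hx; have := mO x hx'; tauto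
    have dBO : Disjoint tB tO := by
      rw [Finset.disjoint_left]; intro x hx hx'
      have := mB x hx; have := mO x hx'; tauto
    refine ⟨tI ∪ tA ∪ tB ∪ tO, ?_, ?_, ?_⟩
    · -- card = k
      have e1 : (tI ∪ tA).card = i + (k - b - i) := by
        rw [Finset.card_union_of_disjoint dIA, htIc, htAc]
      have e2 : (tI ∪ tA ∪ tB).card = i + (k - b - i) + (k - c - i) := by
        rw [Finset.card_union_of_disjoint (Finset.disjoint_union_left.mpr ⟨dIB, dAB⟩),
          e1, htBc]
      have e3 : (tI ∪ tA ∪ tB ∪ tO).card =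
          i + (k - b - i) + (k - c - i) + (i + b + c - k) := by
        rw [Finset.card_union_of_disjoint
          (Finset.disjoint_union_left.mpr
            ⟨Finset.disjoint_union_left.mpr ⟨dIO, dAO⟩, dBO⟩), e2, htOc]
      rw [e3]; omega
    · -- (u \ w).card = b
      have hw1 : u \ (tI ∪ tA ∪ tB ∪ tO) = u \ (tI ∪ tA) := by
        ext x
        have h1 := mB x; have h2 := mO x
        simp only [Finset.mem_sdiff, Finset.mem_union]
        tauto
      have hsub : tI ∪ tA ⊆ u := by
        intro x hx
        rcases Finset.mem_union.mp hx with h | h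
        · exact (mI x h).1
        · exact (mA x h).1
      rw [hw1, Finset.card_sdiff_of_subset hsub, hu,
        Finset.card_union_of_disjoint dIA, htIc, htAc]
      omega
    · -- (w \ v).card = c
      have hw2 : (tI ∪ tA ∪ tB ∪ tO) \ v = tA ∪ tO := by
        ext x
        have h1 := mI x; have h2 := mA x; have h3 := mB x; have h4 := mO x
        simp only [Finset.mem_sdiff, Finset.mem_union]
        constructor
        · rintro ⟨h, hxv⟩
          rcases h with ((h | h) | h) | h
          · exact absurd (h1 h).2 hxv
          · exact Or.inl h
          · exact absurd (h3 h).1 hxv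
          · exact Or.inr h
        · rintro (h | h)
          · exact ⟨Or.inl (Or.inl (Or.inr h)), (h2 h).2⟩
          · exact ⟨Or.inr h, (h4 h).2⟩
      rw [hw2, Finset.card_union_of_disjoint dAO, htAc, htOc]
      omega

end Paper
end

section
/- Let 𝔖 be a vector association scheme on {0, …, k}^d. (1) If α is a cell of 𝔖, then α^c = {(k, …, k) − a : a ∈ α} is also a cell of 𝔖. (2) For all cells α, β of 𝔖, the domination graph {(a, b) ∈ α × β : a_i ≤ b_i for all i ∈ [d]} is biregular: the number of b ∈ β with a ≤ b (coordinatewise) is the same for every a ∈ α, and the number of a ∈ α with a ≤ b is the same for every b ∈ β. -/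
open Polynomial Finset


namespace Paper


noncomputable def vasCount (k d m : ℕ) (β γ : Set (Fin d → Fin (k+1))) (u v : Fin d → Finset (Fin m)) : ℕ :=
  {w : Fin d → Finset (Fin m) | (∀ i, (w i).card = k) ∧
    (∃ b ∈ β, ∀ i, ((u i) \ (w i)).card = (b i : ℕ)) ∧
    (∃ c ∈ γ, ∀ i, ((w i) \ (v i)).card = (c i : ℕ))}.ncard

def IsVAS (k d : ℕ) (S : Set (Set (Fin d → Fin (k+1)))) : Prop :=
  Setoid.IsPartition S ∧
  (∀ α ∈ S, ∀ a ∈ α, ∀ a' ∈ α, ∃ π : Equiv.Perm (Fin d), a' = a ∘ ⇑π) ∧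
  (∀ α ∈ S, ∀ β ∈ S, ∀ γ ∈ S, ∀ a ∈ α, ∀ a' ∈ α, ∀ m : ℕ, 2 * k ≤ m →
    ∀ u v u' v' : Fin d → Finset (Fin m),
      (∀ i, (u i).card = k) → (∀ i, (v i).card = k) →
      (∀ i, ((u i) \ (v i)).card = (a i : ℕ)) →
      (∀ i, (u' i).card = k) → (∀ i, (v' i).card = k) →
      (∀ i, ((u' i) \ (v' i)).card = (a' i : ℕ)) →
      vasCount k d m β γ u v = vasCount k d m β γ u' v')

def VASHomog (k d : ℕ) (S : Set (Set (Fin d → Fin (k+1)))) : Prop :=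
  {a : Fin d → Fin (k+1) | ∃ i₀ : Fin d, (a i₀ : ℕ) = 1 ∧ ∀ i, i ≠ i₀ → (a i : ℕ) = 0} ∈ S

def coVec {k d : ℕ} (a : Fin d → Fin (k+1)) : Fin d → Fin (k+1) :=
  fun i => ⟨k - (a i : ℕ), Nat.lt_succ_of_le (Nat.sub_le _ _)⟩

section Aux





lemma alt_sum_succ (n : ℕ) (g : ℕ → ℚ) :
    ∑ j ∈ range (n+2), (-1:ℚ)^j * ((n+1).choose j) * g j
      = ∑ j ∈ range (n+1), (-1:ℚ)^j * (n.choose j) * g j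
        - ∑ j ∈ range (n+1), (-1:ℚ)^j * (n.choose j) * g (j+1) := by
  rw [Finset.sum_range_succ' (fun j => (-1:ℚ)^j * ((n+1).choose j) * g j) (n+1)]
  have h1 : ∀ j, (-1:ℚ)^(j+1) * ((n+1).choose (j+1)) * g (j+1)
      = -((-1:ℚ)^j * (n.choose j) * g (j+1)) + (-1:ℚ)^(j+1) * (n.choose (j+1)) * g (j+1) := by
    intro j
    rw [Nat.choose_succ_succ]
    push_cast
    ring
  rw [Finset.sum_congr rfl (fun j _ => h1 j), Finset.sum_add_distrib]
  have h2 : ∑ j ∈ range (n+1), (-1:ℚ)^(j+1) * (n.choose (j+1)) * g (j+1)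
      + ((-1:ℚ)^0 * (((n+1).choose 0 : ℕ)) * g 0)
      = ∑ j ∈ range (n+2), (-1:ℚ)^j * (n.choose j) * g j := by
    rw [Finset.sum_range_succ' (fun j => (-1:ℚ)^j * (n.choose j) * g j) (n+1)]
    norm_num
  have h3 : ∑ j ∈ range (n+2), (-1:ℚ)^j * (n.choose j) * g j
      = ∑ j ∈ range (n+1), (-1:ℚ)^j * (n.choose j) * g j := by
    rw [Finset.sum_range_succ]
    simp [Nat.choose_eq_zero_of_lt (Nat.lt_succ_self n)]
  rw [h3] at h2
  rw [Finset.sum_neg_distrib]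
  linarith [h2]

lemma fd_zero (R : ℕ) : ∀ p : Polynomial ℚ, p.natDegree ≤ R →
    ∑ j ∈ range (R+2), (-1:ℚ)^j * ((R+1).choose j) * p.eval (j : ℚ) = 0 := by
  induction R with
  | zero =>
    intro p hp
    rw [Polynomial.eq_C_of_natDegree_le_zero hp]
    simp [Finset.sum_range_succ]
  | succ R ih =>
    intro p hp
    rw [alt_sum_succ]
    set q : Polynomial ℚ := p.comp (X + 1) - p with hq
    have hqe : ∀ j : ℕ, q.eval (j:ℚ) = p.eval (((j+1:ℕ)):ℚ) - p.eval (j:ℚ) := by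
      intro j; push_cast; simp [hq, Polynomial.eval_comp]
    have hqd : q.natDegree ≤ R := by
      by_cases hc : p.natDegree = 0
      · obtain ⟨c, hc2⟩ : ∃ c, p = C c := ⟨_, Polynomial.eq_C_of_natDegree_le_zero (le_of_eq hc)⟩
        have : q = 0 := by rw [hq, hc2]; simp
        simp [this]
      · have hp0 : p ≠ 0 := fun h => hc (by simp [h])
        have hX : (X + 1 : ℚ[X]).natDegree = 1 := by
          have := Polynomial.natDegree_X_add_C (1 : ℚ)
          rw [map_one] at this; exact this
        have hXlc : (X + 1 : ℚ[X]).leadingCoeff = 1 := by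
          have := (Polynomial.monic_X_add_C (1 : ℚ)).leadingCoeff
          rw [map_one] at this; exact this
        have hcomp : (p.comp (X + 1)).natDegree = p.natDegree := by
          rw [Polynomial.natDegree_comp, hX, mul_one]
        have hlc : (p.comp (X + 1)).leadingCoeff = p.leadingCoeff := by
          rw [Polynomial.leadingCoeff_comp (by rw [hX]; exact one_ne_zero), hXlc, one_pow, mul_one]
        have hcomp0 : p.comp (X + 1) ≠ 0 := by
          intro h
          apply hp0
          rw [h] at hlc
          exact Polynomial.leadingCoeff_eq_zero.mp (by simpa using hlc.symm)
        have hdeg : (p.comp (X+1)).degree = p.degree := by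
          rw [Polynomial.degree_eq_natDegree hcomp0, Polynomial.degree_eq_natDegree hp0, hcomp]
        have hlt : q.degree < p.degree := by
          have := Polynomial.degree_sub_lt hdeg hcomp0 hlc
          rwa [hdeg] at this
        have : q.natDegree < p.natDegree := by
          by_cases hq0 : q = 0
          · rw [hq0]; simpa [Polynomial.natDegree_zero] using Nat.pos_of_ne_zero hc
          · exact Polynomial.natDegree_lt_natDegree hq0 hlt
        omega
    have hI := ih q hqd
    rw [Finset.sum_congr rfl (fun j _ => by rw [hqe j])] at hI
    rw [Finset.sum_congr rfl
      (fun (j : ℕ) _ => mul_sub ((-1:ℚ)^j * ((R+1).choose j)) (p.eval ((j+1:ℕ):ℚ)) (p.eval (j:ℚ))),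
      Finset.sum_sub_distrib] at hI
    linarith [hI]

lemma desc_eval_neg_one (n : ℕ) : (descPochhammer ℚ n).eval (-1 : ℚ) = (-1:ℚ)^n * (Nat.factorial n : ℚ) := by
  induction n with
  | zero => simp
  | succ n ih =>
    rw [descPochhammer_succ_eval, ih, Nat.factorial_succ]
    push_cast
    ring

lemma interp (R dd : ℕ) (δ : Fin dd → ℕ) (hδ : ∑ i, δ i ≤ R) :
    ∑ r ∈ range (R+1), (-1:ℚ)^r * ((R+1).choose (r+1)) * ∏ i, ((r.choose (δ i)) : ℚ)
      = (-1:ℚ)^(∑ i, δ i) := by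
  set p : Polynomial ℚ := ∏ i, descPochhammer ℚ (δ i) with hp
  have hne : ∀ i : Fin dd, descPochhammer ℚ (δ i) ≠ 0 :=
    fun i => (monic_descPochhammer ℚ (δ i)).ne_zero
  have hdeg : p.natDegree = ∑ i, δ i := by
    rw [hp, Polynomial.natDegree_prod _ _ (fun i _ => hne i)]
    exact Finset.sum_congr rfl (fun i _ => descPochhammer_natDegree ℚ (δ i))
  have heval : ∀ r : ℕ, p.eval (r:ℚ) = (∏ i, ((Nat.factorial (δ i)) : ℚ)) * ∏ i, ((r.choose (δ i)) : ℚ) := by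
    intro r
    rw [hp, Polynomial.eval_prod, ← Finset.prod_mul_distrib]
    refine Finset.prod_congr rfl (fun i _ => ?_)
    rw [descPochhammer_eval_eq_descFactorial, Nat.descFactorial_eq_factorial_mul_choose]
    push_cast
    ring
  have hevalneg : p.eval (-1:ℚ) = (-1:ℚ)^(∑ i, δ i) * ∏ i, ((Nat.factorial (δ i)) : ℚ) := by
    rw [hp, Polynomial.eval_prod]
    rw [Finset.prod_congr rfl (fun (i : Fin dd) _ => desc_eval_neg_one (δ i)),
      Finset.prod_mul_distrib, Finset.prod_pow_eq_pow_sum]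
  set q : Polynomial ℚ := p.comp (X - 1) with hq
  have hqdeg : q.natDegree ≤ R := by
    rw [hq, Polynomial.natDegree_comp]
    have hX : (X - 1 : ℚ[X]).natDegree = 1 := by
      have := Polynomial.natDegree_X_sub_C (1 : ℚ)
      rw [map_one] at this; exact this
    rw [hX, mul_one, hdeg]; exact hδ
  have hfd := fd_zero R q hqdeg
  have hqe : ∀ j : ℕ, q.eval (j:ℚ) = p.eval ((j:ℚ) - 1) := by
    intro j; rw [hq, Polynomial.eval_comp]; simp
  rw [Finset.sum_congr rfl (fun j _ => by rw [hqe j])] at hfd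
  rw [Finset.sum_range_succ' (fun j => (-1:ℚ)^j * ((R+1).choose j) * p.eval ((j:ℚ)-1)) (R+1)] at hfd
  have hterm : ∀ j : ℕ, (-1:ℚ)^(j+1) * ((R+1).choose (j+1)) * p.eval (((j+1:ℕ):ℚ)-1)
      = -((-1:ℚ)^j * ((R+1).choose (j+1)) * p.eval ((j:ℕ):ℚ)) := by
    intro j
    have : ((j+1:ℕ):ℚ) - 1 = ((j:ℕ):ℚ) := by push_cast; ring
    rw [this]; ring
  rw [Finset.sum_congr rfl (fun j _ => hterm j), Finset.sum_neg_distrib] at hfd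
  have h0 : ((-1:ℚ)^0 * (((R+1).choose 0 : ℕ)) * p.eval (((0:ℕ):ℚ)-1)) = p.eval (-1:ℚ) := by
    norm_num
  rw [h0] at hfd
  have hsum : ∑ j ∈ range (R+1), (-1:ℚ)^j * ((R+1).choose (j+1)) * p.eval ((j:ℕ):ℚ)
      = p.eval (-1:ℚ) := by linarith
  rw [Finset.sum_congr rfl (fun j _ => by rw [heval j]), hevalneg] at hsum
  have hfac : (∏ i, ((Nat.factorial (δ i)) : ℚ)) ≠ 0 := by
    refine Finset.prod_ne_zero_iff.mpr (fun i _ => ?_)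
    exact_mod_cast (Nat.factorial_pos (δ i)).ne'
  refine mul_right_cancel₀ hfac ?_
  rw [Finset.sum_mul]
  calc ∑ j ∈ range (R+1), (-1:ℚ)^j * ((R+1).choose (j+1)) * (∏ i, ((j.choose (δ i)) : ℚ)) * (∏ i, ((Nat.factorial (δ i)) : ℚ))
      = ∑ j ∈ range (R+1), (-1:ℚ)^j * ((R+1).choose (j+1)) * ((∏ i, ((Nat.factorial (δ i)) : ℚ)) * ∏ i, ((j.choose (δ i)) : ℚ)) := by
        exact Finset.sum_congr rfl (fun j _ => by ring)
    _ = (-1:ℚ)^(∑ i, δ i) * ∏ i, ((Nat.factorial (δ i)) : ℚ) := hsum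





lemma scalar_id (k s t : ℕ) (hst : s ≤ t) (htk : t ≤ k) :
    Nat.factorial (k-t) * Nat.factorial t * Nat.choose (k-s) (k-t)
      = Nat.factorial (k-s) * Nat.factorial s * Nat.choose t s := by
  refine Nat.eq_of_mul_eq_mul_right (Nat.factorial_pos (t-s)) ?_
  have h1 : Nat.choose (k-s) (k-t) * Nat.factorial (k-t) * Nat.factorial ((k-s)-(k-t))
      = Nat.factorial (k-s) := Nat.choose_mul_factorial_mul_factorial (by omega)
  have h2 : (k-s)-(k-t) = t-s := by omega
  rw [h2] at h1
  have h3 : Nat.choose t s * Nat.factorial s * Nat.factorial (t-s) = Nat.factorial t :=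
    Nat.choose_mul_factorial_mul_factorial hst
  calc Nat.factorial (k-t) * Nat.factorial t * Nat.choose (k-s) (k-t) * Nat.factorial (t-s)
      = Nat.factorial t * (Nat.choose (k-s) (k-t) * Nat.factorial (k-t) * Nat.factorial (t-s)) := by ring
    _ = Nat.factorial t * Nat.factorial (k-s) := by rw [h1]
    _ = Nat.factorial (k-s) * (Nat.choose t s * Nat.factorial s * Nat.factorial (t-s)) := by rw [h3]; ring
    _ = Nat.factorial (k-s) * Nat.factorial s * Nat.choose t s * Nat.factorial (t-s) := by ring

lemma revision (r s t : ℕ) (hst : s ≤ t) :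
    Nat.choose t s * Nat.choose (r+s) t = Nat.choose (r+s) s * Nat.choose r (t-s) := by
  by_cases h : t ≤ r + s
  · have := Nat.choose_mul (n := r+s) (k := t) (s := s) hst
    rw [Nat.add_sub_cancel] at this
    rw [mul_comm] at this
    exact this
  · push_neg at h
    rw [Nat.choose_eq_zero_of_lt h, Nat.choose_eq_zero_of_lt (by omega : r < t-s)]
    ring

lemma claimA (k r s t : ℕ) (hst : s ≤ t) (htk : t ≤ k) :
    (Nat.factorial (k-t) * Nat.factorial t) * (Nat.choose (k-s) (k-t) * Nat.choose (r+s) t)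
      = (Nat.factorial (k-s) * Nat.factorial s) * (Nat.choose (r+s) s * Nat.choose r (t-s)) := by
  calc (Nat.factorial (k-t) * Nat.factorial t) * (Nat.choose (k-s) (k-t) * Nat.choose (r+s) t)
      = (Nat.factorial (k-t) * Nat.factorial t * Nat.choose (k-s) (k-t)) * Nat.choose (r+s) t := by ring
    _ = (Nat.factorial (k-s) * Nat.factorial s * Nat.choose t s) * Nat.choose (r+s) t := by
        rw [scalar_id k s t hst htk]
    _ = (Nat.factorial (k-s) * Nat.factorial s) * (Nat.choose t s * Nat.choose (r+s) t) := by ring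
    _ = (Nat.factorial (k-s) * Nat.factorial s) * (Nat.choose (r+s) s * Nat.choose r (t-s)) := by
        rw [revision r s t hst]

lemma claimB1 (k d r : ℕ) (βF : Finset (Fin d → Fin (k+1))) (z : Fin d → Fin (k+1)) :
    ∑ b ∈ βF, (∏ i, Nat.factorial (k - (b i:ℕ)) * Nat.factorial (b i:ℕ)) *
        (∏ i, Nat.choose (z i:ℕ) (k - (b i:ℕ)) * Nat.choose ((2*k+r) - k - (z i:ℕ)) (b i:ℕ))
      = (∏ i, Nat.factorial (z i:ℕ) * Nat.factorial (k - (z i:ℕ)))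
        * (∏ i, Nat.choose (r + (k - (z i:ℕ))) (k - (z i:ℕ)))
        * ∑ b ∈ βF.filter (fun b => ∀ i, k - (z i:ℕ) ≤ (b i:ℕ)),
            ∏ i, Nat.choose r ((b i:ℕ) - (k - (z i:ℕ))) := by
  classical
  have hvan : ∀ b ∈ βF,
      (∏ i, Nat.factorial (k - (b i:ℕ)) * Nat.factorial (b i:ℕ)) *
        (∏ i, Nat.choose (z i:ℕ) (k - (b i:ℕ)) * Nat.choose ((2*k+r) - k - (z i:ℕ)) (b i:ℕ)) ≠ 0
      → (∀ i, k - (z i:ℕ) ≤ (b i:ℕ)) := by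
    intro b _ hne
    by_contra hcon
    push_neg at hcon
    obtain ⟨i, hi⟩ := hcon
    apply hne
    have hz : (z i : ℕ) < k - (b i:ℕ) := by
      have := Fin.is_le (z i)
      omega
    have : Nat.choose (z i:ℕ) (k - (b i:ℕ)) * Nat.choose ((2*k+r) - k - (z i:ℕ)) (b i:ℕ) = 0 := by
      rw [Nat.choose_eq_zero_of_lt hz, zero_mul]
    exact mul_eq_zero_of_right _ (Finset.prod_eq_zero (Finset.mem_univ i) this)
  rw [← Finset.sum_filter_of_ne hvan]
  rw [mul_assoc, Finset.mul_sum, Finset.mul_sum]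
  refine Finset.sum_congr rfl (fun b hb => ?_)
  rw [Finset.mem_filter] at hb
  obtain ⟨-, hble⟩ := hb
  rw [← Finset.prod_mul_distrib, ← Finset.prod_mul_distrib, ← Finset.prod_mul_distrib]
  refine Finset.prod_congr rfl (fun i _ => ?_)
  have hzk : (z i : ℕ) ≤ k := Fin.is_le _
  have hbk : (b i : ℕ) ≤ k := Fin.is_le _
  have e2 : (2*k+r) - k - (z i:ℕ) = r + (k - (z i:ℕ)) := by omega
  rw [e2]
  have hA := claimA k r (k - (z i:ℕ)) ((b i:ℕ)) (hble i) hbk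
  have e1 : k - (k - (z i:ℕ)) = (z i:ℕ) := by omega
  rw [e1] at hA
  calc Nat.factorial (k - (b i:ℕ)) * Nat.factorial (b i:ℕ) *
        (Nat.choose (z i:ℕ) (k - (b i:ℕ)) * Nat.choose (r + (k - (z i:ℕ))) (b i:ℕ)) = _ := hA
    _ = Nat.factorial (z i:ℕ) * Nat.factorial (k - (z i:ℕ)) *
        (Nat.choose (r + (k - (z i:ℕ))) (k - (z i:ℕ)) * Nat.choose r ((b i:ℕ) - (k - (z i:ℕ)))) := by
      ring





lemma coord_count (m k a y : ℕ) (hy : y ≤ k) (U V : Finset (Fin m))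
    (hU : U.card = k) (hV : V.card = k) (hUV : (U \ V).card = a) :
    ((univ : Finset (Finset (Fin m))).filter
      (fun s => s.card = k ∧ s ∩ V = ∅ ∧ (U \ s).card = y)).card
      = (Nat.choose a (k - y)) * (Nat.choose (m - k - a) y) := by
  classical
  set A : Finset (Fin m) := U \ V with hA
  set B : Finset (Fin m) := univ \ (U ∪ V) with hB
  have hcard : (A.powersetCard (k-y) ×ˢ B.powersetCard y).card
      = (Nat.choose a (k - y)) * (Nat.choose (m - k - a) y) := by
    rw [Finset.card_product, Finset.card_powersetCard, Finset.card_powersetCard, hUV]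
    congr 2
    rw [hB, Finset.card_sdiff_of_subset (Finset.subset_univ _), Finset.card_univ, Fintype.card_fin]
    have : (U ∪ V).card = a + k := by
      rw [← Finset.card_sdiff_add_card U V, hUV, hV]
    rw [this]
    omega
  rw [← hcard]
  refine Finset.card_bij' (fun s _ => (U ∩ s, s \ U)) (fun p _ => p.1 ∪ p.2) ?_ ?_ ?_ ?_
  · -- maps into product
    intro s hs
    simp only [Finset.mem_filter, Finset.mem_univ, true_and] at hs
    obtain ⟨hsk, hsv, hsy⟩ := hs
    have hUs : (U ∩ s).card = k - y := by
      have := Finset.card_sdiff_add_card_inter U s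
      omega
    have hsU : (s \ U).card = y := by
      have h1 := Finset.card_sdiff_add_card_inter s U
      have h2 : (s ∩ U).card = (U ∩ s).card := by rw [Finset.inter_comm]
      omega
    simp only [Finset.mem_product, Finset.mem_powersetCard]
    refine ⟨⟨?_, hUs⟩, ?_, hsU⟩
    · intro x hx
      simp only [Finset.mem_inter] at hx
      rw [hA, Finset.mem_sdiff]
      refine ⟨hx.1, fun hxV => ?_⟩
      have : x ∈ s ∩ V := Finset.mem_inter.mpr ⟨hx.2, hxV⟩
      rw [hsv] at this
      exact absurd this (Finset.notMem_empty x)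
    · intro x hx
      simp only [Finset.mem_sdiff] at hx
      rw [hB, Finset.mem_sdiff, Finset.mem_union]
      refine ⟨Finset.mem_univ x, fun hxUV => ?_⟩
      rcases hxUV with h | h
      · exact hx.2 h
      · have : x ∈ s ∩ V := Finset.mem_inter.mpr ⟨hx.1, h⟩
        rw [hsv] at this
        exact absurd this (Finset.notMem_empty x)
  · -- j maps into filter
    intro p hp
    simp only [Finset.mem_product, Finset.mem_powersetCard] at hp
    obtain ⟨⟨hpA, hpc⟩, hqB, hqc⟩ := hp
    have hpU : p.1 ⊆ U := fun x hx => (Finset.mem_sdiff.mp (hpA hx)).1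
    have hqU : ∀ x ∈ p.2, x ∉ U ∧ x ∉ V := by
      intro x hx
      have := hqB hx
      rw [hB, Finset.mem_sdiff, Finset.mem_union] at this
      exact ⟨fun h => this.2 (Or.inl h), fun h => this.2 (Or.inr h)⟩
    have hdisj : Disjoint p.1 p.2 := by
      rw [Finset.disjoint_left]
      intro x hx hx2
      exact (hqU x hx2).1 (hpU hx)
    have hUcap : U ∩ (p.1 ∪ p.2) = p.1 := by
      ext x
      simp only [Finset.mem_inter, Finset.mem_union]
      constructor
      · rintro ⟨hxU, hx | hx⟩
        · exact hx
        · exact absurd hxU (hqU x hx).1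
      · intro hx; exact ⟨hpU hx, Or.inl hx⟩
    simp only [Finset.mem_filter, Finset.mem_univ, true_and]
    refine ⟨?_, ?_, ?_⟩
    · rw [Finset.card_union_of_disjoint hdisj, hpc, hqc]; omega
    · rw [Finset.eq_empty_iff_forall_notMem]
      intro x hx
      simp only [Finset.mem_inter, Finset.mem_union] at hx
      obtain ⟨hx1 | hx1, hxV⟩ := hx
      · exact (Finset.mem_sdiff.mp (hpA hx1)).2 hxV
      · exact (hqU x hx1).2 hxV
    · have := Finset.card_sdiff_add_card_inter U (p.1 ∪ p.2)
      rw [hUcap, hpc] at this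
      omega
  · -- left inverse
    intro s hs
    simp only [Finset.mem_filter, Finset.mem_univ, true_and] at hs
    ext x
    simp only [Finset.mem_union, Finset.mem_inter, Finset.mem_sdiff]
    constructor
    · rintro (⟨_, hx⟩ | ⟨hx, _⟩) <;> exact hx
    · intro hx
      by_cases hxU : x ∈ U
      · exact Or.inl ⟨hxU, hx⟩
      · exact Or.inr ⟨hx, hxU⟩
  · -- right inverse
    intro p hp
    simp only [Finset.mem_product, Finset.mem_powersetCard] at hp
    obtain ⟨⟨hpA, hpc⟩, hqB, hqc⟩ := hp
    have hpU : p.1 ⊆ U := fun x hx => (Finset.mem_sdiff.mp (hpA hx)).1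
    have hqU : ∀ x ∈ p.2, x ∉ U := by
      intro x hx
      have := hqB hx
      rw [hB, Finset.mem_sdiff, Finset.mem_union] at this
      exact fun h => this.2 (Or.inl h)
    have h1 : U ∩ (p.1 ∪ p.2) = p.1 := by
      ext x
      simp only [Finset.mem_inter, Finset.mem_union]
      constructor
      · rintro ⟨hxU, hx | hx⟩
        · exact hx
        · exact absurd hxU (hqU x hx)
      · intro hx; exact ⟨hpU hx, Or.inl hx⟩
    have h2 : (p.1 ∪ p.2) \ U = p.2 := by
      ext x
      simp only [Finset.mem_sdiff, Finset.mem_union]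
      constructor
      · rintro ⟨hx | hx, hxU⟩
        · exact absurd (hpU hx) hxU
        · exact hx
      · intro hx; exact ⟨Or.inr hx, hqU x hx⟩
    exact Prod.ext h1 h2

end Aux

/-- the all-k vector -/
def kvec (k d : ℕ) : Fin d → Fin (k+1) := fun _ => Fin.last k

lemma vasCount_eq (k d m : ℕ) (β : Set (Fin d → Fin (k+1))) (a : Fin d → Fin (k+1))
    (u v : Fin d → Finset (Fin m))
    (hu : ∀ i, (u i).card = k) (hv : ∀ i, (v i).card = k)
    (huv : ∀ i, ((u i) \ (v i)).card = (a i : ℕ)) :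
    vasCount k d m β {kvec k d} u v
      = ∑ b ∈ (Set.toFinite β).toFinset,
          ∏ i, (Nat.choose (a i : ℕ) (k - (b i : ℕ))) * (Nat.choose (m - k - (a i : ℕ)) (b i : ℕ)) := by
  classical
  set βF := (Set.toFinite β).toFinset with hβF
  set WF : (Fin d → Fin (k+1)) → Finset (Fin d → Finset (Fin m)) := fun b =>
    Fintype.piFinset (fun i => (univ : Finset (Finset (Fin m))).filter
      (fun s => s.card = k ∧ s ∩ v i = ∅ ∧ (u i \ s).card = (b i : ℕ))) with hWF
  have hset : {w : Fin d → Finset (Fin m) | (∀ i, (w i).card = k) ∧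
      (∃ b ∈ β, ∀ i, ((u i) \ (w i)).card = (b i : ℕ)) ∧
      (∃ c ∈ ({kvec k d} : Set (Fin d → Fin (k+1))), ∀ i, ((w i) \ (v i)).card = (c i : ℕ))}
      = ↑(βF.biUnion WF) := by
    ext w
    simp only [Set.mem_setOf_eq, Finset.coe_biUnion, Set.mem_iUnion, Finset.mem_coe,
      Set.Finite.mem_toFinset, hβF, Set.mem_singleton_iff]
    constructor
    · rintro ⟨hwk, ⟨b, hbβ, hbw⟩, ⟨c, hc, hcw⟩⟩
      subst hc
      refine ⟨b, hbβ, ?_⟩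
      rw [hWF, Fintype.mem_piFinset]
      intro i
      simp only [Finset.mem_filter, Finset.mem_univ, true_and]
      refine ⟨hwk i, ?_, hbw i⟩
      have hk : ((w i) \ (v i)).card = k := by
        have := hcw i
        simpa [kvec] using this
      have := Finset.card_sdiff_add_card_inter (w i) (v i)
      rw [hk, hwk i] at this
      exact Finset.card_eq_zero.mp (by omega)
    · rintro ⟨b, hbβ, hbw⟩
      rw [hWF, Fintype.mem_piFinset] at hbw
      simp only [Finset.mem_filter, Finset.mem_univ, true_and] at hbw
      refine ⟨fun i => (hbw i).1, ⟨b, hbβ, fun i => (hbw i).2.2⟩, ⟨kvec k d, rfl, ?_⟩⟩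
      intro i
      have h1 : (w i ∩ v i).card = 0 := by rw [(hbw i).2.1]; simp
      have := Finset.card_sdiff_add_card_inter (w i) (v i)
      rw [(hbw i).1] at this
      simp only [kvec, Fin.val_last]
      omega
  rw [vasCount, hset, Set.ncard_coe_finset]
  rw [Finset.card_biUnion]
  · refine Finset.sum_congr rfl (fun b hb => ?_)
    rw [hWF]
    rw [Fintype.card_piFinset]
    refine Finset.prod_congr rfl (fun i _ => ?_)
    exact coord_count m k ((a i : ℕ)) ((b i : ℕ)) (Fin.is_le (b i)) (u i) (v i) (hu i) (hv i) (huv i)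
  · intro b hb b' hb' hne
    rw [Function.onFun, Finset.disjoint_left]
    intro w hw hw'
    rw [hWF, Fintype.mem_piFinset] at hw hw'
    apply hne
    funext i
    have h1 := (hw i)
    have h2 := (hw' i)
    simp only [Finset.mem_filter] at h1 h2
    have : (b i : ℕ) = (b' i : ℕ) := by rw [← h1.2.2.2, h2.2.2.2]
    exact Fin.ext this


lemma kvec_cell {k d : ℕ} {S : Set (Set (Fin d → Fin (k+1)))} (hS : IsVAS k d S) :
    ({kvec k d} : Set (Fin d → Fin (k+1))) ∈ S := by
  obtain ⟨γ, ⟨hγS, hkγ⟩, -⟩ := hS.1.2 (kvec k d)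
  have : γ = {kvec k d} := by
    ext y
    simp only [Set.mem_singleton_iff]
    constructor
    · intro hy
      obtain ⟨π, hπ⟩ := hS.2.1 γ hγS (kvec k d) hkγ y hy
      rw [hπ]
      funext i
      rfl
    · rintro rfl; exact hkγ
  rwa [this] at hγS

lemma card_filter_fin (m : ℕ) (p : ℕ → Prop) [DecidablePred p] :
    ((Finset.univ : Finset (Fin m)).filter (fun t => p t.val)).card = ((range m).filter p).card := by
  rw [← Finset.card_map ⟨Fin.val, Fin.val_injective⟩]
  congr 1
  ext n
  simp only [Finset.mem_map, Finset.mem_filter, Finset.mem_univ, true_and,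
    Function.Embedding.coeFn_mk, Finset.mem_range]
  constructor
  · rintro ⟨t, hpt, rfl⟩; exact ⟨t.isLt, hpt⟩
  · rintro ⟨hn, hpn⟩; exact ⟨⟨n, hn⟩, hpn, rfl⟩

lemma exists_uv (m k aa : ℕ) (ha : aa ≤ k) (hm : 2*k ≤ m) :
    ∃ U V : Finset (Fin m), U.card = k ∧ V.card = k ∧ (U \ V).card = aa := by
  classical
  refine ⟨Finset.univ.filter (fun t => t.val < k),
    Finset.univ.filter (fun t => aa ≤ t.val ∧ t.val < k + aa), ?_, ?_, ?_⟩
  · rw [card_filter_fin m (fun t => t < k)]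
    have : (range m).filter (fun t => t < k) = range k := by
      ext t
      simp only [Finset.mem_filter, Finset.mem_range]
      omega
    rw [this, Finset.card_range]
  · rw [card_filter_fin m (fun t => aa ≤ t ∧ t < k + aa)]
    have : (range m).filter (fun t => aa ≤ t ∧ t < k + aa) = Finset.Ico aa (k+aa) := by
      ext t
      simp only [Finset.mem_filter, Finset.mem_range, Finset.mem_Ico]
      omega
    rw [this, Nat.card_Ico]
    omega
  · have : (Finset.univ.filter (fun t : Fin m => t.val < k)) \
        (Finset.univ.filter (fun t => aa ≤ t.val ∧ t.val < k + aa))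
        = Finset.univ.filter (fun t : Fin m => t.val < aa) := by
      ext t
      simp only [Finset.mem_sdiff, Finset.mem_filter, Finset.mem_univ, true_and, not_and, not_lt]
      omega
    rw [this, card_filter_fin m (fun t => t < aa)]
    have : (range m).filter (fun t => t < aa) = range aa := by
      ext t
      simp only [Finset.mem_filter, Finset.mem_range]
      omega
    rw [this, Finset.card_range]

lemma master {k d : ℕ} {S : Set (Set (Fin d → Fin (k+1)))} (hS : IsVAS k d S)
    {α β : Set (Fin d → Fin (k+1))} (hα : α ∈ S) (hβ : β ∈ S)
    {a a' : Fin d → Fin (k+1)} (ha : a ∈ α) (ha' : a' ∈ α) (m : ℕ) (hm : 2*k ≤ m) :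
    ∑ b ∈ (Set.toFinite β).toFinset,
        ∏ i, (Nat.choose (a i : ℕ) (k - (b i : ℕ))) * (Nat.choose (m - k - (a i : ℕ)) (b i : ℕ))
    = ∑ b ∈ (Set.toFinite β).toFinset,
        ∏ i, (Nat.choose (a' i : ℕ) (k - (b i : ℕ))) * (Nat.choose (m - k - (a' i : ℕ)) (b i : ℕ)) := by
  choose u v hu hv huv using fun i => exists_uv m k ((a i : ℕ)) (Fin.is_le (a i)) hm
  choose u' v' hu' hv' huv' using fun i => exists_uv m k ((a' i : ℕ)) (Fin.is_le (a' i)) hm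
  have := hS.2.2 α hα β hβ {kvec k d} (kvec_cell hS) a ha a' ha' m hm u v u' v'
    hu hv huv hu' hv' huv'
  rw [vasCount_eq k d m β a u v hu hv huv, vasCount_eq k d m β a' u' v' hu' hv' huv'] at this
  exact this



lemma isPartition_of {k d : ℕ} {S : Set (Set (Fin d → Fin (k+1)))} (hS : IsVAS k d S) :
    Setoid.IsPartition S := hS.1

lemma coVec_coVec {k d : ℕ} (a : Fin d → Fin (k+1)) : coVec (coVec a) = a := by
  funext i
  exact Fin.ext (Nat.sub_sub_self (Fin.is_le (a i)))

lemma coVec_val {k d : ℕ} (a : Fin d → Fin (k+1)) (i : Fin d) :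
    ((coVec a) i : ℕ) = k - (a i : ℕ) := rfl

lemma term_indicator {k d : ℕ} (a b : Fin d → Fin (k+1)) :
    (∏ i, (Nat.choose (a i : ℕ) (k - (b i : ℕ))) * (Nat.choose (k - (a i : ℕ)) (b i : ℕ)))
      = if b = coVec a then 1 else 0 := by
  by_cases hb : b = coVec a
  · subst hb
    rw [if_pos rfl]
    refine Finset.prod_eq_one (fun i _ => ?_)
    rw [coVec_val]
    have h1 : k - (k - (a i:ℕ)) = (a i:ℕ) := Nat.sub_sub_self (Fin.is_le (a i))
    rw [h1, Nat.choose_self, Nat.choose_self]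
    exact one_mul 1
  · rw [if_neg hb]
    have : ∃ i, (b i : ℕ) ≠ k - (a i : ℕ) := by
      by_contra hcon
      push_neg at hcon
      exact hb (funext (fun i => Fin.ext (by rw [hcon i, coVec_val])))
    obtain ⟨i, hi⟩ := this
    refine Finset.prod_eq_zero (Finset.mem_univ i) ?_
    have hak : (a i:ℕ) ≤ k := Fin.is_le _
    have hbk : (b i:ℕ) ≤ k := Fin.is_le _
    rcases lt_or_gt_of_ne hi with h | h
    · rw [Nat.choose_eq_zero_of_lt (by omega : (a i:ℕ) < k - (b i:ℕ)), zero_mul]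
    · rw [Nat.choose_eq_zero_of_lt (by omega : k - (a i:ℕ) < (b i:ℕ)), mul_zero]

lemma covec_iff {k d : ℕ} {S : Set (Set (Fin d → Fin (k+1)))} (hS : IsVAS k d S)
    {α β : Set (Fin d → Fin (k+1))} (hα : α ∈ S) (hβ : β ∈ S)
    {a a' : Fin d → Fin (k+1)} (ha : a ∈ α) (ha' : a' ∈ α) :
    coVec a ∈ β ↔ coVec a' ∈ β := by
  classical
  have hM := master hS hα hβ ha ha' (2*k) (le_refl _)
  have hk2 : 2*k - k = k := by clear hM; omega
  simp only [hk2] at hM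
  have hconv : ∀ z : Fin d → Fin (k+1),
      (∑ b ∈ (Set.toFinite β).toFinset,
        ∏ i, (Nat.choose (z i : ℕ) (k - (b i : ℕ))) * (Nat.choose (k - (z i : ℕ)) (b i : ℕ)))
      = if coVec z ∈ β then 1 else 0 := by
    intro z
    rw [Finset.sum_congr rfl (fun b _ => term_indicator z b),
      Finset.sum_ite_eq' _ (coVec z) (fun _ => 1)]
    by_cases h : coVec z ∈ β
    · rw [if_pos ((Set.Finite.mem_toFinset _).mpr h), if_pos h]
    · rw [if_neg (fun hc => h ((Set.Finite.mem_toFinset _).mp hc)), if_neg h]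
  rw [hconv a, hconv a'] at hM
  by_cases h : coVec a ∈ β
  · rw [if_pos h] at hM
    constructor
    · intro _
      by_contra hc
      rw [if_neg hc] at hM
      exact one_ne_zero hM
    · intro _; exact h
  · rw [if_neg h] at hM
    constructor
    · intro hc; exact absurd hc h
    · intro hc
      rw [if_pos hc] at hM
      exact absurd hM.symm one_ne_zero

lemma part1 {k d : ℕ} {S : Set (Set (Fin d → Fin (k+1)))} (hS : IsVAS k d S) :
    ∀ α ∈ S, coVec '' α ∈ S := by
  intro α hα
  have hne : α.Nonempty := by
    rw [Set.nonempty_iff_ne_empty]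
    intro h
    exact (isPartition_of hS).1 (h ▸ hα)
  obtain ⟨a₀, ha₀⟩ := hne
  obtain ⟨γ, ⟨hγS, hcγ⟩, -⟩ := (isPartition_of hS).2 (coVec a₀)
  have : coVec '' α = γ := by
    ext y
    constructor
    · rintro ⟨x, hx, rfl⟩
      exact (covec_iff hS hα hγS ha₀ hx).mp hcγ
    · intro hy
      have h1 : coVec (coVec a₀) ∈ α ↔ coVec y ∈ α :=
        covec_iff hS hγS hα hcγ hy
      rw [coVec_coVec] at h1
      have h2 : coVec y ∈ α := h1.mp ha₀
      exact ⟨coVec y, h2, coVec_coVec y⟩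
  rwa [this]


lemma domCount {k d : ℕ} {S : Set (Set (Fin d → Fin (k+1)))} (hS : IsVAS k d S)
    {α β : Set (Fin d → Fin (k+1))} (hα : α ∈ S) (hβ : β ∈ S)
    {a a' : Fin d → Fin (k+1)} (ha : a ∈ α) (ha' : a' ∈ α) :
    ((Set.toFinite β).toFinset.filter (fun b => ∀ i, k - (a i : ℕ) ≤ (b i : ℕ))).card
      = ((Set.toFinite β).toFinset.filter (fun b => ∀ i, k - (a' i : ℕ) ≤ (b i : ℕ))).card := by
  classical
  set βF := (Set.toFinite β).toFinset with hβF
  obtain ⟨π, hπ⟩ := hS.2.1 α hα a ha a' ha'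
  -- transfer products over the permutation
  have hE : (∏ i, Nat.factorial (a' i:ℕ) * Nat.factorial (k - (a' i:ℕ)))
      = ∏ i, Nat.factorial (a i:ℕ) * Nat.factorial (k - (a i:ℕ)) := by
    rw [hπ]; exact Equiv.prod_comp π (fun j => Nat.factorial (a j:ℕ) * Nat.factorial (k - (a j:ℕ)))
  have hA : ∀ r : ℕ, (∏ i, Nat.choose (r + (k - (a' i:ℕ))) (k - (a' i:ℕ)))
      = ∏ i, Nat.choose (r + (k - (a i:ℕ))) (k - (a i:ℕ)) := by
    intro r
    rw [hπ]; exact Equiv.prod_comp π (fun j => Nat.choose (r + (k - (a j:ℕ))) (k - (a j:ℕ)))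
  have hsx : (∑ i, (k - (a' i:ℕ))) = ∑ i, (k - (a i:ℕ)) := by
    rw [hπ]; exact Equiv.sum_comp π (fun j => (k - (a j:ℕ)))
  have hmemβ : ∀ b ∈ βF, b ∈ β := fun b hb => (Set.Finite.mem_toFinset _).mp hb
  have hD : ∀ b ∈ βF, ∀ b'' ∈ βF,
      (∏ i, Nat.factorial (k - (b i:ℕ)) * Nat.factorial (b i:ℕ))
        = ∏ i, Nat.factorial (k - (b'' i:ℕ)) * Nat.factorial (b'' i:ℕ) := by
    intro b hb b'' hb''
    obtain ⟨σ, hσ⟩ := hS.2.1 β hβ b (hmemβ b hb) b'' (hmemβ b'' hb'')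
    rw [hσ]
    exact (Equiv.prod_comp σ (fun j => Nat.factorial (k - (b j:ℕ)) * Nat.factorial (b j:ℕ))).symm
  have hsB : ∀ b ∈ βF, ∀ b'' ∈ βF, (∑ i, (b i:ℕ)) = ∑ i, (b'' i:ℕ) := by
    intro b hb b'' hb''
    obtain ⟨σ, hσ⟩ := hS.2.1 β hβ b (hmemβ b hb) b'' (hmemβ b'' hb'')
    rw [hσ]
    exact (Equiv.sum_comp σ (fun j => (b j:ℕ))).symm
  -- Q equality for all r
  have hQ : ∀ r : ℕ,
      (∑ b ∈ βF.filter (fun b => ∀ i, k - (a i:ℕ) ≤ (b i:ℕ)),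
        ∏ i, Nat.choose r ((b i:ℕ) - (k - (a i:ℕ))))
      = ∑ b ∈ βF.filter (fun b => ∀ i, k - (a' i:ℕ) ≤ (b i:ℕ)),
        ∏ i, Nat.choose r ((b i:ℕ) - (k - (a' i:ℕ))) := by
    intro r
    rcases Finset.eq_empty_or_nonempty βF with h0 | ⟨b₀, hb₀⟩
    · rw [h0]; simp
    · have hM := master hS hα hβ ha ha' (2*k+r) (by omega)
      rw [← hβF] at hM
      set D := ∏ i, Nat.factorial (k - (b₀ i:ℕ)) * Nat.factorial (b₀ i:ℕ) with hDdef
      have hB1 := claimB1 k d r βF a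
      have hB1' := claimB1 k d r βF a'
      have hDb : ∀ b ∈ βF, (∏ i, Nat.factorial (k - (b i:ℕ)) * Nat.factorial (b i:ℕ)) = D :=
        fun b hb => hD b hb b₀ hb₀
      have hL : ∀ z : Fin d → Fin (k+1),
          (∑ b ∈ βF, (∏ i, Nat.factorial (k - (b i:ℕ)) * Nat.factorial (b i:ℕ)) *
            (∏ i, Nat.choose (z i:ℕ) (k - (b i:ℕ)) * Nat.choose ((2*k+r) - k - (z i:ℕ)) (b i:ℕ)))
          = D * ∑ b ∈ βF, ∏ i, Nat.choose (z i:ℕ) (k - (b i:ℕ)) * Nat.choose ((2*k+r) - k - (z i:ℕ)) (b i:ℕ) := by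
        intro z
        rw [Finset.mul_sum]
        exact Finset.sum_congr rfl (fun b hb => by rw [hDb b hb])
      rw [hL] at hB1 hB1'
      have hEq : (∏ i, Nat.factorial (a i:ℕ) * Nat.factorial (k - (a i:ℕ)))
          * (∏ i, Nat.choose (r + (k - (a i:ℕ))) (k - (a i:ℕ)))
          * (∑ b ∈ βF.filter (fun b => ∀ i, k - (a i:ℕ) ≤ (b i:ℕ)),
              ∏ i, Nat.choose r ((b i:ℕ) - (k - (a i:ℕ))))
          = (∏ i, Nat.factorial (a i:ℕ) * Nat.factorial (k - (a i:ℕ)))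
          * (∏ i, Nat.choose (r + (k - (a i:ℕ))) (k - (a i:ℕ)))
          * (∑ b ∈ βF.filter (fun b => ∀ i, k - (a' i:ℕ) ≤ (b i:ℕ)),
              ∏ i, Nat.choose r ((b i:ℕ) - (k - (a' i:ℕ)))) := by
        rw [← hB1]
        conv_rhs => rw [← hE, ← hA r]
        rw [← hB1']
        rw [hM]
      have hpos : 0 < (∏ i, Nat.factorial (a i:ℕ) * Nat.factorial (k - (a i:ℕ)))
          * (∏ i, Nat.choose (r + (k - (a i:ℕ))) (k - (a i:ℕ))) := by
        apply Nat.mul_pos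
        · exact Finset.prod_pos (fun i _ => Nat.mul_pos (Nat.factorial_pos _) (Nat.factorial_pos _))
        · exact Finset.prod_pos (fun i _ => Nat.choose_pos (Nat.le_add_left _ _))
      exact Nat.eq_of_mul_eq_mul_left hpos hEq
  -- the alternating functional
  set R := d * k with hRdef
  have key : ∀ z : Fin d → Fin (k+1),
      ((-1:ℚ)^(∑ i, (k - (z i:ℕ)))) *
        (∑ r ∈ Finset.range (R+1), (-1:ℚ)^r * ((R+1).choose (r+1)) *
          (((∑ b ∈ βF.filter (fun b => ∀ i, k - (z i:ℕ) ≤ (b i:ℕ)),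
            ∏ i, Nat.choose r ((b i:ℕ) - (k - (z i:ℕ)))) : ℕ) : ℚ))
      = ∑ b ∈ βF.filter (fun b => ∀ i, k - (z i:ℕ) ≤ (b i:ℕ)), (-1:ℚ)^(∑ i, (b i:ℕ)) := by
    intro z
    have hswap : ∑ r ∈ Finset.range (R+1), (-1:ℚ)^r * ((R+1).choose (r+1)) *
          (((∑ b ∈ βF.filter (fun b => ∀ i, k - (z i:ℕ) ≤ (b i:ℕ)),
            ∏ i, Nat.choose r ((b i:ℕ) - (k - (z i:ℕ)))) : ℕ) : ℚ)
        = ∑ b ∈ βF.filter (fun b => ∀ i, k - (z i:ℕ) ≤ (b i:ℕ)),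
            ∑ r ∈ Finset.range (R+1), (-1:ℚ)^r * ((R+1).choose (r+1)) *
              ∏ i, ((Nat.choose r ((b i:ℕ) - (k - (z i:ℕ)))) : ℚ) := by
      calc ∑ r ∈ Finset.range (R+1), (-1:ℚ)^r * ((R+1).choose (r+1)) *
          (((∑ b ∈ βF.filter (fun b => ∀ i, k - (z i:ℕ) ≤ (b i:ℕ)),
            ∏ i, Nat.choose r ((b i:ℕ) - (k - (z i:ℕ)))) : ℕ) : ℚ)
          = ∑ r ∈ Finset.range (R+1), ∑ b ∈ βF.filter (fun b => ∀ i, k - (z i:ℕ) ≤ (b i:ℕ)),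
              (-1:ℚ)^r * ((R+1).choose (r+1)) * ∏ i, ((Nat.choose r ((b i:ℕ) - (k - (z i:ℕ)))) : ℚ) := by
            refine Finset.sum_congr rfl (fun r _ => ?_)
            push_cast
            rw [Finset.mul_sum]
        _ = _ := Finset.sum_comm
    rw [hswap, Finset.mul_sum]
    refine Finset.sum_congr rfl (fun b hb => ?_)
    rw [Finset.mem_filter] at hb
    have hδsum : (∑ i, ((b i:ℕ) - (k - (z i:ℕ)))) ≤ R := by
      calc (∑ i, ((b i:ℕ) - (k - (z i:ℕ)))) ≤ ∑ _i : Fin d, k :=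
            Finset.sum_le_sum (fun i _ => by have := Fin.is_le (b i); omega)
        _ = d * k := by rw [Finset.sum_const, Finset.card_univ, Fintype.card_fin, smul_eq_mul]
    rw [interp R d _ hδsum]
    have hadd : (∑ i, (k - (z i:ℕ))) + (∑ i, ((b i:ℕ) - (k - (z i:ℕ)))) = ∑ i, (b i:ℕ) := by
      rw [← Finset.sum_add_distrib]
      exact Finset.sum_congr rfl (fun i _ => by have := hb.2 i; omega)
    rw [← pow_add, hadd]
  -- conclude
  rcases Finset.eq_empty_or_nonempty βF with h0 | ⟨b₀, hb₀⟩
  · rw [h0]; simp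
  · have hkey := key a
    have hkey' := key a'
    have heqQ : ∀ r ∈ Finset.range (R+1),
        (-1:ℚ)^r * ((R+1).choose (r+1)) *
          (((∑ b ∈ βF.filter (fun b => ∀ i, k - (a i:ℕ) ≤ (b i:ℕ)),
            ∏ i, Nat.choose r ((b i:ℕ) - (k - (a i:ℕ)))) : ℕ) : ℚ)
        = (-1:ℚ)^r * ((R+1).choose (r+1)) *
          (((∑ b ∈ βF.filter (fun b => ∀ i, k - (a' i:ℕ) ≤ (b i:ℕ)),
            ∏ i, Nat.choose r ((b i:ℕ) - (k - (a' i:ℕ)))) : ℕ) : ℚ) := by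
      intro r _
      rw [hQ r]
    rw [Finset.sum_congr rfl heqQ, ← hsx, hkey'] at hkey
    -- hkey : ∑ b ∈ filter a', (-1)^{Σb} = ∑ b ∈ filter a, (-1)^{Σb}
    have hconst : ∀ (z : Fin d → Fin (k+1)),
        (∑ b ∈ βF.filter (fun b => ∀ i, k - (z i:ℕ) ≤ (b i:ℕ)), ((-1:ℚ)^(∑ i, (b i:ℕ))))
        = ((βF.filter (fun b => ∀ i, k - (z i:ℕ) ≤ (b i:ℕ))).card : ℚ) * (-1:ℚ)^(∑ i, (b₀ i:ℕ)) := by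
      intro z
      rw [Finset.sum_congr rfl (fun b hb => by
        rw [hsB b (Finset.mem_filter.mp hb).1 b₀ hb₀])]
      rw [Finset.sum_const, nsmul_eq_mul]
    rw [hconst a, hconst a'] at hkey
    have hne : ((-1:ℚ)^(∑ i, (b₀ i:ℕ))) ≠ 0 := pow_ne_zero _ (by norm_num)
    have := mul_right_cancel₀ hne hkey
    exact_mod_cast this.symm




theorem stmt16 (k d : ℕ) (hk : 1 ≤ k) (hd : 1 ≤ d)
    (S : Set (Set (Fin d → Fin (k+1)))) (hS : IsVAS k d S) :
    (∀ α ∈ S, coVec '' α ∈ S) ∧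
    (∀ α ∈ S, ∀ β ∈ S,
      (∀ a ∈ α, ∀ a' ∈ α,
        {b : Fin d → Fin (k+1) | b ∈ β ∧ ∀ i, (a i : ℕ) ≤ (b i : ℕ)}.ncard =
        {b : Fin d → Fin (k+1) | b ∈ β ∧ ∀ i, (a' i : ℕ) ≤ (b i : ℕ)}.ncard) ∧
      (∀ b ∈ β, ∀ b' ∈ β,
        {a : Fin d → Fin (k+1) | a ∈ α ∧ ∀ i, (a i : ℕ) ≤ (b i : ℕ)}.ncard =
        {a : Fin d → Fin (k+1) | a ∈ α ∧ ∀ i, (a i : ℕ) ≤ (b' i : ℕ)}.ncard)) := by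
  classical
  refine ⟨part1 hS, ?_⟩
  intro α hα β hβ
  have hαc : coVec '' α ∈ S := part1 hS α hα
  have hinj : Function.Injective (coVec : (Fin d → Fin (k+1)) → (Fin d → Fin (k+1))) :=
    Function.LeftInverse.injective coVec_coVec
  constructor
  · intro a ha a' ha'
    have hca : coVec a ∈ coVec '' α := ⟨a, ha, rfl⟩
    have hca' : coVec a' ∈ coVec '' α := ⟨a', ha', rfl⟩
    have hdc := domCount hS hαc hβ hca hca'
    have hset : ∀ z : Fin d → Fin (k+1),
        {b : Fin d → Fin (k+1) | b ∈ β ∧ ∀ i, (z i : ℕ) ≤ (b i : ℕ)}.ncard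
        = ((Set.toFinite β).toFinset.filter
            (fun b => ∀ i, k - ((coVec z) i : ℕ) ≤ (b i : ℕ))).card := by
      clear hdc
      intro z
      rw [← Set.ncard_coe_finset]
      congr 1
      ext b
      simp only [Finset.coe_filter, Finset.mem_coe, Finset.mem_filter, Set.Finite.mem_toFinset, Set.mem_setOf_eq]
      simp only [coVec_val]
      refine and_congr_right (fun _ => forall_congr' (fun i => ?_))
      have h1 := Fin.is_le (z i)
      have h2 := Fin.is_le (b i)
      omega
    rw [hset a, hset a']
    exact hdc
  · intro b hb b' hb'
    have hdc := domCount hS hβ hαc hb hb'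
    have hset2 : ∀ c : Fin d → Fin (k+1),
        {x : Fin d → Fin (k+1) | x ∈ α ∧ ∀ i, (x i : ℕ) ≤ (c i : ℕ)}.ncard
        = ((Set.toFinite (coVec '' α)).toFinset.filter
            (fun y => ∀ i, k - (c i : ℕ) ≤ (y i : ℕ))).card := by
      clear hdc
      intro c
      rw [← Set.ncard_coe_finset]
      have himg : (↑((Set.toFinite (coVec '' α)).toFinset.filter
            (fun y => ∀ i, k - (c i : ℕ) ≤ (y i : ℕ))) : Set (Fin d → Fin (k+1)))
          = coVec '' {x : Fin d → Fin (k+1) | x ∈ α ∧ ∀ i, (x i : ℕ) ≤ (c i : ℕ)} := by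
        ext y
        simp only [Finset.coe_filter, Set.Finite.mem_toFinset, Set.mem_setOf_eq]
        constructor
        · rintro ⟨⟨x, hx, rfl⟩, hcond⟩
          refine ⟨x, ⟨hx, fun i => ?_⟩, rfl⟩
          have h1 := hcond i
          rw [coVec_val] at h1
          have h2 := Fin.is_le (x i)
          have h3 := Fin.is_le (c i)
          omega
        · rintro ⟨x, ⟨hx, hle⟩, rfl⟩
          refine ⟨⟨x, hx, rfl⟩, fun i => ?_⟩
          rw [coVec_val]
          have := hle i
          omega
      rw [himg, Set.ncard_image_of_injective _ hinj]
    rw [hset2 b, hset2 b', hdc]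

end Paper
end

section
/- Let 𝔖 be a homogeneous vector association scheme on {0, …, k}^d and let β be a cell of 𝔖. Then the sum Σ_{b ∈ β} b is a constant vector, i.e., Σ_{b ∈ β} b_i is the same for every coordinate i ∈ [d]. -/
namespace Paper


open Finset

lemma card_filter_three (m : ℕ) (R P Q : Finset (Fin m)) (hRP : Disjoint R P)
    (hRQ : Disjoint R Q) (hPQ : Disjoint P Q) (p q : ℕ) :
    ((univ : Finset (Finset (Fin m))).filter
      (fun s => R ⊆ s ∧ s ⊆ R ∪ P ∪ Q ∧ (s ∩ P).card = p ∧ (s ∩ Q).card = q)).card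
      = P.card.choose p * Q.card.choose q := by
  rw [← Finset.card_powersetCard p P, ← Finset.card_powersetCard q Q, ← Finset.card_product]
  apply Finset.card_bij' (i := fun s _ => (s ∩ P, s ∩ Q))
    (j := fun ab _ => R ∪ ab.1 ∪ ab.2)
  · intro s hs
    simp only [mem_filter, mem_univ, true_and] at hs
    simp only [mem_product, mem_powersetCard]
    exact ⟨⟨inter_subset_right, hs.2.2.1⟩, ⟨inter_subset_right, hs.2.2.2⟩⟩
  · rintro ⟨a, b⟩ hab
    simp only [mem_product, mem_powersetCard] at hab
    obtain ⟨⟨haP, hap⟩, ⟨hbQ, hbq⟩⟩ := hab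
    have haPi : (R ∪ a ∪ b) ∩ P = a := by
      rw [union_inter_distrib_right, union_inter_distrib_right]
      rw [(disjoint_iff_inter_eq_empty.mp hRP), inter_eq_left.mpr haP,
        disjoint_iff_inter_eq_empty.mp (hPQ.symm.mono_left hbQ)]
      simp
    have hbQi : (R ∪ a ∪ b) ∩ Q = b := by
      rw [union_inter_distrib_right, union_inter_distrib_right]
      rw [(disjoint_iff_inter_eq_empty.mp hRQ), inter_eq_left.mpr hbQ,
        disjoint_iff_inter_eq_empty.mp (hPQ.mono_left haP)]
      simp
    simp only [mem_filter, mem_univ, true_and]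
    refine ⟨by intro z hz; simp [hz], ?_, by rw [haPi, hap], by rw [hbQi, hbq]⟩
    · intro z hz
      simp only [mem_union] at hz ⊢
      rcases hz with (hz | hz) | hz
      · exact Or.inl (Or.inl hz)
      · exact Or.inl (Or.inr (haP hz))
      · exact Or.inr (hbQ hz)
  · intro s hs
    simp only [mem_filter, mem_univ, true_and] at hs
    obtain ⟨hRs, hsub, _, _⟩ := hs
    ext z
    simp only [mem_union, mem_inter]
    constructor
    · rintro ((hz | ⟨hz, _⟩) | ⟨hz, _⟩)
      · exact hRs hz
      · exact hz
      · exact hz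
    · intro hz
      rcases mem_union.mp (hsub hz) with h | h
      · rcases mem_union.mp h with h' | h'
        · exact Or.inl (Or.inl h')
        · exact Or.inl (Or.inr ⟨hz, h'⟩)
      · exact Or.inr ⟨hz, h⟩
  · rintro ⟨a, b⟩ hab
    simp only [mem_product, mem_powersetCard] at hab
    obtain ⟨⟨haP, _⟩, ⟨hbQ, _⟩⟩ := hab
    have haPi : (R ∪ a ∪ b) ∩ P = a := by
      rw [union_inter_distrib_right, union_inter_distrib_right]
      rw [(disjoint_iff_inter_eq_empty.mp hRP), inter_eq_left.mpr haP,
        disjoint_iff_inter_eq_empty.mp (hPQ.symm.mono_left hbQ)]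
      simp
    have hbQi : (R ∪ a ∪ b) ∩ Q = b := by
      rw [union_inter_distrib_right, union_inter_distrib_right]
      rw [(disjoint_iff_inter_eq_empty.mp hRQ), inter_eq_left.mpr hbQ,
        disjoint_iff_inter_eq_empty.mp (hPQ.mono_left haP)]
      simp
    simp only [Prod.mk.injEq]
    exact ⟨haPi, hbQi⟩

lemma choose_id1 (k t : ℕ) (hk : 1 ≤ k) : k * (k-1).choose t = (k - t) * k.choose t := by
  have h1 := Nat.add_one_mul_choose_eq (k-1) t
  have h2 := Nat.choose_succ_right_eq k t
  have hs : k - 1 + 1 = k := by omega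
  rw [hs] at h1
  rw [h1, h2]
  ring

lemma choose_id2 (k t : ℕ) (hk : 1 ≤ k) (ht : 1 ≤ t) : k * (k-1).choose (t-1) = t * k.choose t := by
  have h1 := Nat.add_one_mul_choose_eq (k-1) (t-1)
  have hs : k - 1 + 1 = k := by omega
  have hts : t - 1 + 1 = t := by omega
  rw [hs, hts] at h1
  rw [h1]
  ring

lemma count_g (m k t : ℕ) (ht : t ≤ k) (U : Finset (Fin m)) (hU : U.card = k) :
    ((univ : Finset (Finset (Fin m))).filter
      (fun s => s.card = k ∧ (U \ s).card = t ∧ (s \ U).card = t)).card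
      = k.choose t * (m - k).choose t := by
  have key : ((univ : Finset (Finset (Fin m))).filter
      (fun s => s.card = k ∧ (U \ s).card = t ∧ (s \ U).card = t)) =
      ((univ : Finset (Finset (Fin m))).filter
      (fun s => (∅ : Finset (Fin m)) ⊆ s ∧ s ⊆ ∅ ∪ U ∪ Uᶜ ∧ (s ∩ U).card = k - t ∧ (s ∩ Uᶜ).card = t)) := by
    ext s
    simp only [mem_filter, mem_univ, true_and, empty_subset, empty_union, union_compl,
      subset_univ, ← sdiff_eq, true_and]
    have h1 : (U \ s).card + (U ∩ s).card = U.card := card_sdiff_add_card_inter U s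
    have h2 : (s \ U).card + (s ∩ U).card = s.card := card_sdiff_add_card_inter s U
    rw [inter_comm U s] at h1
    rw [hU] at h1
    rw [show s ∩ Uᶜ = s \ U from (sdiff_eq).symm]
    constructor
    · rintro ⟨hs, hUs, hsU⟩
      exact ⟨by omega, hsU⟩
    · rintro ⟨hsU, hsd⟩
      exact ⟨by omega, by omega, hsd⟩
  rw [key, card_filter_three m ∅ U Uᶜ (by simp) (by simp) disjoint_compl_right]
  rw [card_compl, Fintype.card_fin, hU, Nat.choose_symm ht]

lemma count_N (m k t : ℕ) (hk : 1 ≤ k) (hm : 2*k ≤ m) (ht : t ≤ k)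
    (A : Finset (Fin m)) (x y : Fin m) (hA : A.card = k - 1) (hxA : x ∉ A) (hyA : y ∉ A)
    (hxy : x ≠ y) :
    k * (m - k) * ((univ : Finset (Finset (Fin m))).filter
      (fun s => s.card = k ∧ ((insert y A) \ s).card = t ∧ (s \ (insert x A)).card = t)).card
      = t * (m - 2*t) * (k.choose t * (m - k).choose t) := by
  have hyU : y ∉ insert x A := by simp [Ne.symm hxy, hyA]
  have hxU' : x ∉ insert y A := by simp [hxy, hxA]
  have hU'card : (insert y A).card = k := by rw [card_insert_of_notMem hyA]; omega
  have hUcard : (insert x A).card = k := by rw [card_insert_of_notMem hxA]; omega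
  rcases Nat.eq_zero_or_pos t with rfl | htpos
  · have hzero : ((univ : Finset (Finset (Fin m))).filter
      (fun s => s.card = k ∧ ((insert y A) \ s).card = 0 ∧ (s \ (insert x A)).card = 0)).card = 0 := by
      rw [Finset.card_eq_zero, Finset.eq_empty_iff_forall_notMem]
      intro s hs
      simp only [mem_filter, mem_univ, true_and, Finset.card_eq_zero,
        Finset.sdiff_eq_empty_iff_subset] at hs
      obtain ⟨hsk, h1, h2⟩ := hs
      have : y ∈ insert x A := h2 (h1 (mem_insert_self y A))
      simp only [Finset.mem_insert] at this
      rcases this with h | h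
      · exact hxy h.symm
      · exact hyA h
    rw [hzero]; ring
  -- now 1 ≤ t
  set U' := insert y A with hU'def
  set U := insert x A with hUdef
  set B := insert x (insert y A) with hBdef
  set Q := Bᶜ with hQdef
  have hBcard : B.card = k + 1 := by
    rw [hBdef, card_insert_of_notMem hxU', hU'card]
  have hQcard : Q.card = m - k - 1 := by
    rw [hQdef, card_compl, Fintype.card_fin, hBcard]; omega
  have hxB : x ∈ B := mem_insert_self x _
  have hyB : y ∈ B := by simp [hBdef]
  have hAB : A ⊆ B := by intro z hz; simp [hBdef, hz]
  -- generic card facts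
  have fUs : ∀ s : Finset (Fin m), x ∈ s → (s ∩ U).card = (s ∩ A).card + 1 := by
    intro s hx
    rw [hUdef, inter_insert_of_mem hx, card_insert_of_notMem (fun h => hxA (mem_inter.mp h).2)]
  have fUs' : ∀ s : Finset (Fin m), x ∉ s → (s ∩ U).card = (s ∩ A).card := by
    intro s hx
    rw [hUdef, inter_insert_of_notMem hx]
  have fU's : ∀ s : Finset (Fin m), y ∈ s → (U' \ s).card = (A \ s).card := by
    intro s hy
    rw [hU'def, insert_sdiff_of_mem _ hy]
  have fU's' : ∀ s : Finset (Fin m), y ∉ s → (U' \ s).card = (A \ s).card + 1 := by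
    intro s hy
    rw [hU'def, insert_sdiff_of_notMem _ hy,
      card_insert_of_notMem (fun h => hyA (mem_sdiff.mp h).1)]
  have fAs : ∀ s : Finset (Fin m), (A \ s).card + (s ∩ A).card = k - 1 := by
    intro s
    have := card_sdiff_add_card_inter A s
    rw [inter_comm] at this
    omega
  have fsU : ∀ s : Finset (Fin m), (s \ U).card + (s ∩ U).card = s.card := fun s =>
    card_sdiff_add_card_inter s U
  have fQ : ∀ s : Finset (Fin m), (s ∩ Q).card + (s ∩ B).card = s.card := by
    intro s
    have := card_sdiff_add_card_inter s B
    rw [sdiff_eq, ← hQdef] at this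
    exact this
  have fB11 : ∀ s : Finset (Fin m), x ∈ s → y ∈ s → (s ∩ B).card = (s ∩ A).card + 2 := by
    intro s hx hy
    have hy' : y ∉ s ∩ A := fun h => hyA (mem_inter.mp h).2
    have hx' : x ∉ insert y (s ∩ A) := by
      intro h
      rcases mem_insert.mp h with h | h
      · exact hxy h
      · exact hxA (mem_inter.mp h).2
    rw [hBdef, inter_insert_of_mem hx, inter_insert_of_mem hy,
      card_insert_of_notMem hx', card_insert_of_notMem hy']
  have fB00 : ∀ s : Finset (Fin m), x ∉ s → y ∉ s → (s ∩ B).card = (s ∩ A).card := by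
    intro s hx hy
    rw [hBdef, inter_insert_of_notMem hx, inter_insert_of_notMem hy]
  set F := ((univ : Finset (Finset (Fin m))).filter
      (fun s => s.card = k ∧ (U' \ s).card = t ∧ (s \ U).card = t)) with hFdef
  have hsplity : F.card = (F.filter (fun s => y ∈ s)).card + (F.filter (fun s => y ∉ s)).card :=
    (card_filter_add_card_filter_not _).symm
  have hsplit1 : (F.filter (fun s => y ∈ s)).card =
      ((F.filter (fun s => y ∈ s)).filter (fun s => x ∈ s)).card +
      ((F.filter (fun s => y ∈ s)).filter (fun s => x ∉ s)).card :=
    (card_filter_add_card_filter_not _).symm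
  have hsplit0 : (F.filter (fun s => y ∉ s)).card =
      ((F.filter (fun s => y ∉ s)).filter (fun s => x ∈ s)).card +
      ((F.filter (fun s => y ∉ s)).filter (fun s => x ∉ s)).card :=
    (card_filter_add_card_filter_not _).symm
  have E10 : ((F.filter (fun s => y ∈ s)).filter (fun s => x ∉ s)).card = 0 := by
    rw [Finset.card_eq_zero, Finset.eq_empty_iff_forall_notMem]
    intro s hs
    simp only [filter_filter, hFdef, mem_filter, mem_univ, true_and] at hs
    obtain ⟨⟨⟨hs1, hs2, hs3⟩, hy⟩, hx⟩ := hs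
    have e1 := fU's s hy
    have e2 := fUs' s hx
    have e3 := fAs s
    have e4 := fsU s
    omega
  have E01 : ((F.filter (fun s => y ∉ s)).filter (fun s => x ∈ s)).card = 0 := by
    rw [Finset.card_eq_zero, Finset.eq_empty_iff_forall_notMem]
    intro s hs
    simp only [filter_filter, hFdef, mem_filter, mem_univ, true_and] at hs
    obtain ⟨⟨⟨hs1, hs2, hs3⟩, hy⟩, hx⟩ := hs
    have e1 := fU's' s hy
    have e2 := fUs s hx
    have e3 := fAs s
    have e4 := fsU s
    omega
  have C11 : ((F.filter (fun s => y ∈ s)).filter (fun s => x ∈ s)).card =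
      (k-1).choose t * (m-k-1).choose (t-1) := by
    rcases Nat.lt_or_ge t k with htk | htk
    · -- t ≤ k - 1
      have key : (F.filter (fun s => y ∈ s)).filter (fun s => x ∈ s) =
          ((univ : Finset (Finset (Fin m))).filter
          (fun s => (insert x {y} : Finset (Fin m)) ⊆ s ∧ s ⊆ insert x {y} ∪ A ∪ Q ∧
            (s ∩ A).card = k-1-t ∧ (s ∩ Q).card = t-1)) := by
        ext s
        simp only [filter_filter, hFdef, mem_filter, mem_univ, true_and]
        constructor
        · rintro ⟨⟨⟨hs1, hs2, hs3⟩, hy⟩, hx⟩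
          have e1 := fU's s hy
          have e2 := fUs s hx
          have e3 := fAs s
          have e4 := fsU s
          have e5 := fQ s
          have e6 := fB11 s hx hy
          refine ⟨insert_subset hx (by simpa using hy), ?_, by omega, by omega⟩
          intro z hz
          by_cases hzB : z ∈ B
          · simp only [hBdef, mem_insert] at hzB
            simp only [mem_union, mem_insert, mem_singleton]
            rcases hzB with h | h | h
            · exact Or.inl (Or.inl (Or.inl h))
            · exact Or.inl (Or.inl (Or.inr h))
            · exact Or.inl (Or.inr h)
          · simp only [mem_union]
            exact Or.inr (by simpa [hQdef] using hzB)
        · rintro ⟨hR, hsub, hA', hQ'⟩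
          have hx : x ∈ s := hR (mem_insert_self _ _)
          have hy : y ∈ s := hR (by simp)
          have e1 := fU's s hy
          have e2 := fUs s hx
          have e3 := fAs s
          have e4 := fsU s
          have e5 := fQ s
          have e6 := fB11 s hx hy
          exact ⟨⟨⟨by omega, by omega, by omega⟩, hy⟩, hx⟩
      rw [key, card_filter_three m _ A Q ?_ ?_ ?_]
      · rw [hA, hQcard]
        congr 1
        have : k - 1 - t = (k-1) - t := rfl
        rw [this, Nat.choose_symm (by omega)]
      · simp only [disjoint_left, mem_insert, mem_singleton]
        rintro z (rfl | rfl) <;> intro h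
        · exact hxA h
        · exact hyA h
      · simp only [disjoint_left, mem_insert, mem_singleton]
        rintro z (rfl | rfl) <;> intro h
        · exact (mem_compl.mp h) hxB
        · exact (mem_compl.mp h) hyB
      · simp only [disjoint_left]
        intro z hz h
        exact (mem_compl.mp h) (hAB hz)
    · -- t = k : empty
      have htk' : t = k := le_antisymm ht htk
      rw [Finset.card_eq_zero.mpr, Nat.choose_eq_zero_of_lt (by omega), zero_mul]
      rw [Finset.eq_empty_iff_forall_notMem]
      intro s hs
      simp only [filter_filter, hFdef, mem_filter, mem_univ, true_and] at hs
      obtain ⟨⟨⟨hs1, hs2, hs3⟩, hy⟩, hx⟩ := hs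
      have e2 := fUs s hx
      have e3 := fAs s
      have e4 := fsU s
      omega
  have C00 : ((F.filter (fun s => y ∉ s)).filter (fun s => x ∉ s)).card =
      (k-1).choose (t-1) * (m-k-1).choose t := by
    have key : (F.filter (fun s => y ∉ s)).filter (fun s => x ∉ s) =
        ((univ : Finset (Finset (Fin m))).filter
        (fun s => (∅ : Finset (Fin m)) ⊆ s ∧ s ⊆ ∅ ∪ A ∪ Q ∧
          (s ∩ A).card = k-t ∧ (s ∩ Q).card = t)) := by
      ext s
      simp only [filter_filter, hFdef, mem_filter, mem_univ, true_and, empty_subset,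
        true_and, empty_union]
      constructor
      · rintro ⟨⟨⟨hs1, hs2, hs3⟩, hy⟩, hx⟩
        have e1 := fU's' s hy
        have e2 := fUs' s hx
        have e3 := fAs s
        have e4 := fsU s
        have e5 := fQ s
        have e6 := fB00 s hx hy
        refine ⟨?_, by omega, by omega⟩
        intro z hz
        by_cases hzB : z ∈ B
        · simp only [hBdef, mem_insert] at hzB
          rcases hzB with h | h | h
          · exact absurd (h ▸ hz) hx
          · exact absurd (h ▸ hz) hy
          · exact mem_union_left _ h
        · exact mem_union_right _ (by simpa [hQdef] using hzB)
      · rintro ⟨hsub, hA', hQ'⟩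
        have hx : x ∉ s := fun h => by
          rcases mem_union.mp (hsub h) with h' | h'
          · exact hxA h'
          · exact (mem_compl.mp h') hxB
        have hy : y ∉ s := fun h => by
          rcases mem_union.mp (hsub h) with h' | h'
          · exact hyA h'
          · exact (mem_compl.mp h') hyB
        have e1 := fU's' s hy
        have e2 := fUs' s hx
        have e3 := fAs s
        have e4 := fsU s
        have e5 := fQ s
        have e6 := fB00 s hx hy
        exact ⟨⟨⟨by omega, by omega, by omega⟩, hy⟩, hx⟩
    rw [key, card_filter_three m ∅ A Q (by simp) (by simp) ?_]
    · rw [hA, hQcard]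
      congr 1
      have h1 : k - t = (k-1) - (t-1) := by omega
      rw [h1, Nat.choose_symm (by omega)]
    · simp only [disjoint_left]
      intro z hz h
      exact (mem_compl.mp h) (hAB hz)
  -- assemble
  have hFcard : F.card = (k-1).choose t * (m-k-1).choose (t-1)
      + (k-1).choose (t-1) * (m-k-1).choose t := by
    omega
  rw [hFcard]
  -- final arithmetic
  have hK : 1 ≤ m - k := by omega
  have ia := choose_id1 k t hk
  have ib := choose_id2 k t hk htpos
  have ic := choose_id2 (m-k) t hK htpos
  have id' := choose_id1 (m-k) t hK
  have expand : k * (m-k) * ((k-1).choose t * (m-k-1).choose (t-1)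
      + (k-1).choose (t-1) * (m-k-1).choose t)
      = (k * (k-1).choose t) * ((m-k) * ((m-k)-1).choose (t-1))
      + (k * (k-1).choose (t-1)) * ((m-k) * ((m-k)-1).choose t) := by
    have h1 : m - k - 1 = (m-k) - 1 := rfl
    rw [h1]; ring
  rw [expand, ia, ib, ic, id']
  have hsum : (k - t) + ((m-k) - t) = m - 2*t := by omega
  calc (k - t) * k.choose t * (t * (m-k).choose t) + t * k.choose t * ((m - k - t) * (m-k).choose t)
      = t * ((k-t) + ((m-k) - t)) * (k.choose t * (m-k).choose t) := by ring
    _ = t * (m - 2*t) * (k.choose t * (m-k).choose t) := by rw [hsum]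

lemma vasCount_eval (k d m : ℕ) (hk : 1 ≤ k) (hm : 2*k ≤ m)
    (β : Set (Fin d → Fin (k+1)))
    (hperm : ∀ b ∈ β, ∀ c ∈ β, ∃ π : Equiv.Perm (Fin d), c = b ∘ ⇑π)
    (i : Fin d) (A : Finset (Fin m)) (x y : Fin m)
    (hA : A.card = k - 1) (hxA : x ∉ A) (hyA : y ∉ A) (hxy : x ≠ y) :
    k * (m - k) * vasCount k d m β β
      (Function.update (fun _ => insert x A) i (insert y A)) (fun _ => insert x A)
    = ∑ b ∈ β.toFinite.toFinset,
        (b i : ℕ) * (m - 2 * (b i : ℕ)) * ∏ i', (k.choose (b i' : ℕ) * (m - k).choose (b i' : ℕ)) := by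
  classical
  set U : Finset (Fin m) := insert x A with hUdef
  set U' : Finset (Fin m) := insert y A with hU'def
  set u : Fin d → Finset (Fin m) := Function.update (fun _ => U) i U' with hudef
  set v : Fin d → Finset (Fin m) := fun _ => U with hvdef
  have hUcard : U.card = k := by rw [hUdef, card_insert_of_notMem hxA]; omega
  have hU'card : U'.card = k := by rw [hU'def, card_insert_of_notMem hyA]; omega
  set βF := β.toFinite.toFinset with hβF
  -- step 1: vasCount as a card of a biUnion
  have step1 : vasCount k d m β β u v
      = ∑ b ∈ βF, ∏ i', ((univ : Finset (Finset (Fin m))).filter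
          (fun s => s.card = k ∧ (u i' \ s).card = (b i' : ℕ) ∧ (s \ v i').card = (b i' : ℕ))).card := by
    rw [vasCount, Set.ncard_eq_toFinset_card' _]
    have hset : ({w : Fin d → Finset (Fin m) | (∀ i, (w i).card = k) ∧
        (∃ b ∈ β, ∀ i, ((u i) \ (w i)).card = (b i : ℕ)) ∧
        (∃ c ∈ β, ∀ i, ((w i) \ (v i)).card = (c i : ℕ))}).toFinset
        = βF.biUnion (fun b => Fintype.piFinset (fun i' =>
            (univ : Finset (Finset (Fin m))).filter
            (fun s => s.card = k ∧ (u i' \ s).card = (b i' : ℕ) ∧ (s \ v i').card = (b i' : ℕ)))) := by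
      ext w
      simp only [Set.mem_toFinset, Set.mem_setOf_eq, mem_biUnion, Fintype.mem_piFinset,
        mem_filter, mem_univ, true_and, hβF, Set.Finite.mem_toFinset]
      constructor
      · rintro ⟨hwcard, ⟨b, hbβ, hb⟩, ⟨c, hcβ, hc⟩⟩
        have hbc : ∀ i' : Fin d, i' ≠ i → (b i' : ℕ) = (c i' : ℕ) := by
          intro i' hne
          have hui' : u i' = U := Function.update_of_ne hne _ _
          have h1 : (U \ w i').card + (U ∩ w i').card = U.card :=
            card_sdiff_add_card_inter U (w i')
          have h2 : (w i' \ U).card + (w i' ∩ U).card = (w i').card :=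
            card_sdiff_add_card_inter (w i') U
          rw [inter_comm] at h1
          have hb' := hb i'
          have hc' := hc i'
          rw [hui'] at hb'
          have hwc := hwcard i'
          simp only [hvdef] at hc'
          omega
        have hsum : ∑ i', (b i' : ℕ) = ∑ i', (c i' : ℕ) := by
          obtain ⟨π, hπ⟩ := hperm b hbβ c hcβ
          rw [hπ]
          exact (Equiv.sum_comp π (fun i' => (b i' : ℕ))).symm
        have hbceq : b = c := by
          funext i'
          by_cases hne : i' = i
          · subst hne
            have h1 : ∑ x' ∈ univ.erase i', (b x' : ℕ) + (b i' : ℕ) = ∑ x', (b x' : ℕ) :=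
              Finset.sum_erase_add _ _ (mem_univ i')
            have h2 : ∑ x' ∈ univ.erase i', (c x' : ℕ) + (c i' : ℕ) = ∑ x', (c x' : ℕ) :=
              Finset.sum_erase_add _ _ (mem_univ i')
            have h3 : ∑ x' ∈ univ.erase i', (b x' : ℕ) = ∑ x' ∈ univ.erase i', (c x' : ℕ) :=
              Finset.sum_congr rfl (fun x' hx' => hbc x' (Finset.ne_of_mem_erase hx'))
            have : (b i' : ℕ) = (c i' : ℕ) := by omega
            exact Fin.ext this
          · exact Fin.ext (hbc i' hne)
        exact ⟨b, hbβ, fun i' => ⟨hwcard i', hb i', by rw [hbceq]; exact hc i'⟩⟩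
      · rintro ⟨b, hbβ, hb⟩
        exact ⟨fun i' => (hb i').1, ⟨b, hbβ, fun i' => (hb i').2.1⟩,
          ⟨b, hbβ, fun i' => (hb i').2.2⟩⟩
    rw [hset, Finset.card_biUnion]
    · exact Finset.sum_congr rfl (fun b _ => Fintype.card_piFinset _)
    · intro b hb c hc hbc
      simp only [disjoint_left]
      intro w hw hw'
      apply hbc
      simp only [Fintype.mem_piFinset, mem_filter, mem_univ, true_and] at hw hw'
      funext i'
      exact Fin.ext (((hw i').2.1).symm.trans ((hw' i').2.1))
  rw [step1, Finset.mul_sum]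
  apply Finset.sum_congr rfl
  intro b hb
  have hle : ∀ i' : Fin d, (b i' : ℕ) ≤ k := fun i' => Nat.lt_succ_iff.mp (b i').isLt
  have hsplit : ∏ i', ((univ : Finset (Finset (Fin m))).filter
      (fun s => s.card = k ∧ (u i' \ s).card = (b i' : ℕ) ∧ (s \ v i').card = (b i' : ℕ))).card
      = ((univ : Finset (Finset (Fin m))).filter
      (fun s => s.card = k ∧ (U' \ s).card = (b i : ℕ) ∧ (s \ U).card = (b i : ℕ))).card
      * ∏ i' ∈ univ.erase i, (k.choose (b i' : ℕ) * (m - k).choose (b i' : ℕ)) := by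
    rw [← Finset.mul_prod_erase univ _ (mem_univ i)]
    congr 1
    · congr 2
      funext s
      rw [hudef]
      simp [Function.update_self, hvdef]
    · apply Finset.prod_congr rfl
      intro i' hi'
      have hne : i' ≠ i := Finset.ne_of_mem_erase hi'
      have hui' : u i' = U := Function.update_of_ne hne _ _
      rw [hui']
      simp only [hvdef]
      exact count_g m k _ (hle i') U hUcard
  rw [hsplit, ← mul_assoc]
  rw [count_N m k (b i : ℕ) hk hm (hle i) A x y hA hxA hyA hxy]
  rw [mul_assoc, ← Finset.mul_prod_erase univ _ (mem_univ i)]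

theorem stmt17 (k d : ℕ) (hk : 1 ≤ k) (hd : 1 ≤ d)
    (S : Set (Set (Fin d → Fin (k+1)))) (hS : IsVAS k d S) (hhom : VASHomog k d S)
    (β : Set (Fin d → Fin (k+1))) (hβ : β ∈ S) (i j : Fin d) :
    ∑ᶠ b ∈ β, ((b : Fin d → Fin (k+1)) i : ℕ) = ∑ᶠ b ∈ β, ((b : Fin d → Fin (k+1)) j : ℕ) := by
  classical
  have hperm := hS.2.1 β hβ
  set βF := β.toFinite.toFinset with hβFdef
  have hcoe : (β : Set (Fin d → Fin (k+1))) = ↑βF := (Set.Finite.coe_toFinset _).symm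
  rw [hcoe, finsum_mem_coe_finset, finsum_mem_coe_finset]
  have hβne : β.Nonempty := by
    rw [Set.nonempty_iff_ne_empty]
    intro h
    exact hS.1.1 (h ▸ hβ)
  obtain ⟨a₀, ha₀⟩ := hβne
  have ha₀F : a₀ ∈ βF := (Set.Finite.mem_toFinset _).mpr ha₀
  set ev : Fin d → Fin d → Fin (k+1) := fun i₀ i' => if i' = i₀ then 1 else 0 with hevdef
  have hval1 : ((1 : Fin (k+1)) : ℕ) = 1 := by
    rw [Fin.val_one']
    exact Nat.mod_eq_of_lt (by omega)
  have hev : ∀ i₀ : Fin d, ev i₀ ∈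
      {a : Fin d → Fin (k+1) | ∃ i₁ : Fin d, (a i₁ : ℕ) = 1 ∧ ∀ i', i' ≠ i₁ → (a i' : ℕ) = 0} := by
    intro i₀
    refine ⟨i₀, ?_, ?_⟩
    · simp only [hevdef, if_pos rfl]
      exact hval1
    · intro i' hne
      simp only [hevdef, if_neg hne, Fin.val_zero]
  have expand : ∀ l : Fin d, ∑ b ∈ βF, (b l : ℕ) * (2*k+1 - 2*(b l : ℕ))
      = ∑ b ∈ βF, (b l : ℕ) * (2*k - 2*(b l : ℕ)) + ∑ b ∈ βF, (b l : ℕ) := by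
    intro l
    rw [← Finset.sum_add_distrib]
    apply Finset.sum_congr rfl
    intro b hb
    have hle : (b l : ℕ) ≤ k := Fin.is_le _
    have h2 : 2*k+1 - 2*(b l : ℕ) = (2*k - 2*(b l : ℕ)) + 1 := by omega
    rw [h2, Nat.mul_add, Nat.mul_one]
  have main : ∀ m : ℕ, 2*k ≤ m →
      (∑ b ∈ βF, (b i : ℕ) * (m - 2 * (b i : ℕ))) = ∑ b ∈ βF, (b j : ℕ) * (m - 2 * (b j : ℕ)) := by
    intro m hm
    have hcard : k + 1 ≤ (univ : Finset (Fin m)).card := by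
      rw [Finset.card_univ, Fintype.card_fin]; omega
    obtain ⟨T, -, hT⟩ := Finset.exists_subset_card_eq hcard
    obtain ⟨x, hxT, y, hyT, hxy⟩ := Finset.one_lt_card.mp (by omega : 1 < T.card)
    have hxy : x ≠ y := hxy
    set A := (T.erase x).erase y with hAdef
    have hyex : y ∈ T.erase x := Finset.mem_erase.mpr ⟨fun h => hxy h.symm, hyT⟩
    have hA : A.card = k - 1 := by
      rw [hAdef, Finset.card_erase_of_mem hyex, Finset.card_erase_of_mem hxT, hT]; omega
    have hxA : x ∉ A := fun h => Finset.notMem_erase x T (Finset.mem_of_mem_erase h)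
    have hyA : y ∉ A := Finset.notMem_erase y _
    have hUcard : (insert x A).card = k := by
      rw [Finset.card_insert_of_notMem hxA]; omega
    have hU'card : (insert y A).card = k := by
      rw [Finset.card_insert_of_notMem hyA]; omega
    have hdiff : insert y A \ insert x A = {y} := by
      ext z
      simp only [mem_sdiff, mem_insert, mem_singleton]
      constructor
      · rintro ⟨h1, h2⟩
        rcases h1 with rfl | h1
        · rfl
        · exact absurd (Or.inr h1) h2
      · rintro rfl
        refine ⟨Or.inl rfl, ?_⟩
        rintro (h | h)
        · exact hxy h.symm
        · exact hyA h
    have hcards : ∀ i₀ i' : Fin d,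
        ((Function.update (fun _ => insert x A) i₀ (insert y A) : Fin d → Finset (Fin m)) i').card = k := by
      intro i₀ i'
      by_cases h : i' = i₀
      · subst h; rw [Function.update_self]; exact hU'card
      · rw [Function.update_of_ne h]; exact hUcard
    have hpat : ∀ i₀ i' : Fin d,
        (((Function.update (fun _ => insert x A) i₀ (insert y A) : Fin d → Finset (Fin m)) i') \
          ((fun _ => insert x A : Fin d → Finset (Fin m)) i')).card = ((ev i₀) i' : ℕ) := by
      intro i₀ i'
      by_cases h : i' = i₀
      · subst h
        rw [Function.update_self]
        show (insert y A \ insert x A).card = _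
        rw [hdiff, Finset.card_singleton]
        simp only [hevdef, if_pos rfl]
        exact hval1.symm
      · rw [Function.update_of_ne h]
        show (insert x A \ insert x A).card = _
        rw [sdiff_self]
        simp only [hevdef, if_neg h, Fin.val_zero, Finset.bot_eq_empty, Finset.card_empty]
    have hveq := hS.2.2 _ hhom β hβ β hβ (ev i) (hev i) (ev j) (hev j) m hm
      (Function.update (fun _ => insert x A) i (insert y A)) (fun _ => insert x A)
      (Function.update (fun _ => insert x A) j (insert y A)) (fun _ => insert x A)
      (hcards i) (fun _ => hUcard) (hpat i) (hcards j) (fun _ => hUcard) (hpat j)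
    have h1 := vasCount_eval k d m hk hm β hperm i A x y hA hxA hyA hxy
    have h2 := vasCount_eval k d m hk hm β hperm j A x y hA hxA hyA hxy
    have hmul : k * (m-k) * vasCount k d m β β
        (Function.update (fun _ => insert x A) i (insert y A)) (fun _ => insert x A)
        = k * (m-k) * vasCount k d m β β
        (Function.update (fun _ => insert x A) j (insert y A)) (fun _ => insert x A) := by
      rw [hveq]
    rw [h1, h2] at hmul
    have hGconst : ∀ b ∈ βF, (∏ i', (k.choose (b i' : ℕ) * (m-k).choose (b i' : ℕ)))
        = ∏ i', (k.choose (a₀ i' : ℕ) * (m-k).choose (a₀ i' : ℕ)) := by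
      intro b hb
      obtain ⟨π, hπ⟩ := hperm a₀ ha₀ b ((Set.Finite.mem_toFinset _).mp hb)
      rw [hπ]
      exact Equiv.prod_comp π (fun i' => k.choose ((a₀ i' : ℕ)) * (m-k).choose ((a₀ i' : ℕ)))
    have hre : ∀ l : Fin d,
        (∑ b ∈ βF, (b l : ℕ) * (m - 2*(b l : ℕ)) * ∏ i', (k.choose (b i' : ℕ) * (m-k).choose (b i' : ℕ)))
        = (∑ b ∈ βF, (b l : ℕ) * (m - 2*(b l : ℕ))) *
          ∏ i', (k.choose (a₀ i' : ℕ) * (m-k).choose (a₀ i' : ℕ)) := by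
      intro l
      rw [Finset.sum_mul]
      exact Finset.sum_congr rfl (fun b hb => by rw [hGconst b hb])
    rw [hre i, hre j] at hmul
    have hkk : k + k ≤ m := by rw [← two_mul]; exact hm
    have hkm : k ≤ m - k := Nat.le_sub_of_add_le hkk
    have hGpos : 0 < ∏ i', (k.choose (a₀ i' : ℕ) * (m-k).choose (a₀ i' : ℕ)) := by
      apply Finset.prod_pos
      intro i' _
      exact Nat.mul_pos (Nat.choose_pos (Fin.is_le _))
        (Nat.choose_pos (le_trans (Fin.is_le _) hkm))
    exact Nat.eq_of_mul_eq_mul_right hGpos hmul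
  have e1 := main (2*k) le_rfl
  have e2 := main (2*k+1) (Nat.le_succ _)
  rw [expand i, expand j] at e2
  rw [e1] at e2
  exact Nat.add_left_cancel e2

end Paper
end

section
/- Let 𝔖 be a homogeneous vector association scheme on {0, …, k}^d with d ≤ 2. Then 𝔖 is trivial, i.e., the cells of 𝔖 are exactly the orbits of Sym(d) on {0, …, k}^d. -/
namespace Paper


lemma fin2cases (i : Fin 2) : i = 0 ∨ i = 1 := by omega

/-- interval `[p, q)` inside `Fin (2*k)` -/
def iv (k p q : ℕ) : Finset (Fin (2*k)) :=
  Finset.univ.filter (fun t => p ≤ t.val ∧ t.val < q)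

lemma mem_iv {k p q : ℕ} {t : Fin (2*k)} : t ∈ iv k p q ↔ p ≤ t.val ∧ t.val < q := by
  simp [iv]

lemma iv_card {k p q : ℕ} (h2 : q ≤ 2*k) : (iv k p q).card = q - p := by
  have h : iv k p q = (Finset.Ico p q).attachFin
      (fun m hm => lt_of_lt_of_le (Finset.mem_Ico.mp hm).2 h2) := by
    ext t
    simp [mem_iv, Finset.mem_attachFin, Finset.mem_Ico]
  rw [h, Finset.card_attachFin, Nat.card_Ico]

lemma no_singleton (k : ℕ) (hk : 1 ≤ k) (S : Set (Set (Fin 2 → Fin (k+1))))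
    (hS : IsVAS k 2 S) (hhom : VASHomog k 2 S) (b : Fin 2 → Fin (k+1))
    (hb : ({b} : Set (Fin 2 → Fin (k+1))) ∈ S) (hlt : (b 0 : ℕ) < (b 1 : ℕ)) : False := by
  set x := (b 0 : ℕ) with hxdef
  set y := (b 1 : ℕ) with hydef
  have hyk : y ≤ k := by have := (b 1).isLt; omega
  have hy1 : 1 ≤ y := by omega
  have hxk : x ≤ k := by omega
  -- the cell containing c₀ = (x, y-1)
  set c₀ : Fin 2 → Fin (k+1) := ![b 0, ⟨y - 1, by omega⟩] with hc₀def
  obtain ⟨γ, ⟨hγS, hc₀γ⟩, -⟩ := hS.1.2 c₀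
  -- homogeneous cell elements
  set e01 : Fin 2 → Fin (k+1) := ![⟨0, by omega⟩, ⟨1, by omega⟩] with he01def
  set e10 : Fin 2 → Fin (k+1) := ![⟨1, by omega⟩, ⟨0, by omega⟩] with he10def
  have he01 : e01 ∈ {a : Fin 2 → Fin (k+1) | ∃ i₀ : Fin 2, (a i₀ : ℕ) = 1 ∧ ∀ i, i ≠ i₀ → (a i : ℕ) = 0} := by
    refine ⟨1, by simp [he01def], fun i hi => ?_⟩
    rcases fin2cases i with rfl | rfl
    · simp [he01def]
    · exact absurd rfl hi
  have he10 : e10 ∈ {a : Fin 2 → Fin (k+1) | ∃ i₀ : Fin 2, (a i₀ : ℕ) = 1 ∧ ∀ i, i ≠ i₀ → (a i : ℕ) = 0} := by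
    refine ⟨0, by simp [he10def], fun i hi => ?_⟩
    rcases fin2cases i with rfl | rfl
    · exact absurd rfl hi
    · simp [he10def]
  -- the finsets
  set A : Finset (Fin (2*k)) := iv k 0 k with hAdef
  set B : Finset (Fin (2*k)) := iv k 1 (k+1) with hBdef
  set W1 : Finset (Fin (2*k)) := iv k x (k+x) with hW1def
  set W2 : Finset (Fin (2*k)) := iv k y (k+y) with hW2def
  have hA : A.card = k := by rw [hAdef, iv_card (by omega)]; omega
  have hB : B.card = k := by rw [hBdef, iv_card (by omega)]; omega
  have hW1 : W1.card = k := by rw [hW1def, iv_card (by omega)]; omega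
  have hW2 : W2.card = k := by rw [hW2def, iv_card (by omega)]; omega
  have hAA : (A \ A).card = 0 := by simp
  have hAB : (A \ B).card = 1 := by
    have h : A \ B = iv k 0 1 := by
      ext t; simp [hAdef, hBdef, iv]; omega
    rw [h, iv_card (by omega)]
  have hAW1 : (A \ W1).card = x := by
    have h : A \ W1 = iv k 0 x := by
      ext t; simp [hAdef, hW1def, iv]; omega
    rw [h, iv_card (by omega)]; omega
  have hW1A : (W1 \ A).card = x := by
    have h : W1 \ A = iv k k (k+x) := by
      ext t; simp [hAdef, hW1def, iv]; omega
    rw [h, iv_card (by omega)]; omega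
  have hAW2 : (A \ W2).card = y := by
    have h : A \ W2 = iv k 0 y := by
      ext t; simp [hAdef, hW2def, iv]; omega
    rw [h, iv_card (by omega)]; omega
  have hW2B : (W2 \ B).card = y - 1 := by
    have h : W2 \ B = iv k (k+1) (k+y) := by
      ext t; simp [hBdef, hW2def, iv]; omega
    rw [h, iv_card (by omega)]; omega
  -- positivity of the first count
  have hpos : 0 < vasCount k 2 (2*k) {b} γ ![A, A] ![A, B] := by
    rw [vasCount, Set.ncard_pos (Set.toFinite _)]
    refine ⟨![W1, W2], ?_, ⟨b, Set.mem_singleton b, ?_⟩, ⟨c₀, hc₀γ, ?_⟩⟩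
    · intro i; rcases fin2cases i with rfl | rfl <;> simpa using (by assumption)
    · intro i
      rcases fin2cases i with rfl | rfl
      · simpa using hAW1
      · simpa using hAW2
    · intro i
      rcases fin2cases i with rfl | rfl
      · simpa [hc₀def] using hW1A
      · simpa [hc₀def] using hW2B
  -- the second count is zero
  have hzero : vasCount k 2 (2*k) {b} γ ![A, A] ![B, A] = 0 := by
    rw [vasCount, (Set.ncard_eq_zero (Set.toFinite _)), Set.eq_empty_iff_forall_notMem]
    rintro w ⟨hwc, ⟨b', hb', hbe⟩, ⟨c, hcγ, hce⟩⟩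
    have hb'b : b' = b := hb'
    have h1 : (A \ w 1).card = y := by
      have := hbe 1; rw [hb'b] at this; simpa using this
    have hsym : (w 1 \ A).card = y := by
      rw [Finset.card_sdiff_comm (by rw [hwc 1, hA]), h1]
    have hcy : (c 1 : ℕ) = y := by
      have h2 := hce 1; simp at h2; rw [h2] at hsym; exact hsym
    obtain ⟨π, hπ⟩ := hS.2.1 γ hγS c₀ hc₀γ c hcγ
    have hcv : (c 1 : ℕ) = (c₀ (π 1) : ℕ) := by rw [hπ]; rfl
    rcases fin2cases (π 1) with h | h <;> rw [h] at hcv <;> simp [hc₀def] at hcv <;> omega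
  -- apply the VAS counting axiom
  have heq := hS.2.2 _ hhom {b} hb γ hγS e01 he01 e10 he10 (2*k) le_rfl
    ![A, A] ![A, B] ![A, A] ![B, A]
    (by intro i; rcases fin2cases i with rfl | rfl <;> simpa using hA)
    (by intro i; rcases fin2cases i with rfl | rfl <;> simp [hA, hB])
    (by
      intro i
      rcases fin2cases i with rfl | rfl
      · simp [he01def, hAA]
      · simpa [he01def] using hAB)
    (by intro i; rcases fin2cases i with rfl | rfl <;> simpa using hA)
    (by intro i; rcases fin2cases i with rfl | rfl <;> simp [hA, hB])
    (by
      intro i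
      rcases fin2cases i with rfl | rfl
      · simpa [he10def] using hAB
      · simp [he10def, hAA])
  omega

lemma keyswap (k : ℕ) (hk : 1 ≤ k) (S : Set (Set (Fin 2 → Fin (k+1))))
    (hS : IsVAS k 2 S) (hhom : VASHomog k 2 S) :
    ∀ α ∈ S, ∀ a ∈ α, ∀ π : Equiv.Perm (Fin 2), a ∘ ⇑π ∈ α := by
  intro α hα a ha π
  rcases fin2cases (π 0) with h0 | h0
  · have h1 : π 1 = 1 := by
      rcases fin2cases (π 1) with h | h
      · exact absurd (π.injective (h.trans h0.symm)) (by decide)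
      · exact h
    have h : a ∘ ⇑π = a := by
      funext i; rcases fin2cases i with rfl | rfl <;> simp [h0, h1]
    rwa [h]
  · have h1 : π 1 = 0 := by
      rcases fin2cases (π 1) with h | h
      · exact h
      · exact absurd (π.injective (h.trans h0.symm)) (by decide)
    set g : Fin 2 → Fin (k+1) := a ∘ ⇑π with hg
    have hg0 : g 0 = a 1 := by simp [hg, h0]
    have hg1 : g 1 = a 0 := by simp [hg, h1]
    by_contra hgα
    have hne : a 0 ≠ a 1 := by
      intro h
      apply hgα
      have he : g = a := by
        funext i; rcases fin2cases i with rfl | rfl <;> simp [hg0, hg1, h]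
      rwa [he]
    -- α = {a}
    have hαa : α = {a} := by
      apply Set.eq_singleton_iff_unique_mem.mpr
      refine ⟨ha, fun a' ha' => ?_⟩
      obtain ⟨σ, hσ⟩ := hS.2.1 α hα a ha a' ha'
      rcases fin2cases (σ 0) with s0 | s0
      · have s1 : σ 1 = 1 := by
          rcases fin2cases (σ 1) with h | h
          · exact absurd (σ.injective (h.trans s0.symm)) (by decide)
          · exact h
        rw [hσ]; funext i; rcases fin2cases i with rfl | rfl <;> simp [s0, s1]
      · have s1 : σ 1 = 0 := by
          rcases fin2cases (σ 1) with h | h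
          · exact h
          · exact absurd (σ.injective (h.trans s0.symm)) (by decide)
        exfalso; apply hgα
        have he : a' = g := by
          rw [hσ]; funext i
          rcases fin2cases i with rfl | rfl
          · rw [hg0]; simp [s0]
          · rw [hg1]; simp [s1]
        rwa [he] at ha'
    have hbS : ({a} : Set (Fin 2 → Fin (k+1))) ∈ S := hαa ▸ hα
    -- the cell of g is {g}
    obtain ⟨γ', ⟨hγ'S, hgγ'⟩, -⟩ := hS.1.2 g
    have hγ'g : γ' = {g} := by
      apply Set.eq_singleton_iff_unique_mem.mpr
      refine ⟨hgγ', fun a' ha' => ?_⟩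
      obtain ⟨σ, hσ⟩ := hS.2.1 γ' hγ'S g hgγ' a' ha'
      rcases fin2cases (σ 0) with s0 | s0
      · have s1 : σ 1 = 1 := by
          rcases fin2cases (σ 1) with h | h
          · exact absurd (σ.injective (h.trans s0.symm)) (by decide)
          · exact h
        rw [hσ]; funext i; rcases fin2cases i with rfl | rfl <;> simp [s0, s1]
      · have s1 : σ 1 = 0 := by
          rcases fin2cases (σ 1) with h | h
          · exact h
          · exact absurd (σ.injective (h.trans s0.symm)) (by decide)
        exfalso
        have he : a' = a := by
          rw [hσ]; funext i
          rcases fin2cases i with rfl | rfl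
          · simp [s0, ← hg1]
          · simp [s1, ← hg0]
        rw [he] at ha'
        have : γ' = α := ExistsUnique.unique (hS.1.2 a) ⟨hγ'S, ha'⟩ ⟨hα, ha⟩
        rw [this] at hgγ'
        exact hgα hgγ'
    have hgS : ({g} : Set (Fin 2 → Fin (k+1))) ∈ S := hγ'g ▸ hγ'S
    have hnev : (a 0 : ℕ) ≠ (a 1 : ℕ) := fun h => hne (Fin.ext h)
    rcases lt_or_gt_of_ne hnev with h | h
    · exact no_singleton k hk S hS hhom a hbS h
    · refine no_singleton k hk S hS hhom g hgS ?_
      rw [hg0, hg1]; exact h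

lemma triv_of (k d : ℕ) (S : Set (Set (Fin d → Fin (k+1)))) (hS : IsVAS k d S)
    (hπ : ∀ α ∈ S, ∀ a ∈ α, ∀ π : Equiv.Perm (Fin d), a ∘ ⇑π ∈ α) :
    S = Set.range (fun a : Fin d → Fin (k+1) =>
      {a' : Fin d → Fin (k+1) | ∃ π : Equiv.Perm (Fin d), a' = a ∘ ⇑π}) := by
  have key : ∀ α ∈ S, ∀ a ∈ α,
      {a' : Fin d → Fin (k+1) | ∃ π : Equiv.Perm (Fin d), a' = a ∘ ⇑π} = α := by
    intro α hα a ha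
    ext a'
    constructor
    · rintro ⟨π, rfl⟩; exact hπ α hα a ha π
    · intro ha'; exact hS.2.1 α hα a ha a' ha'
  ext α
  constructor
  · intro hα
    have hne : α ≠ ∅ := fun h => hS.1.1 (h ▸ hα)
    obtain ⟨a, ha⟩ := Set.nonempty_iff_ne_empty.mpr hne
    exact ⟨a, key α hα a ha⟩
  · rintro ⟨a, rfl⟩
    show {a' : Fin d → Fin (k+1) | ∃ π : Equiv.Perm (Fin d), a' = a ∘ ⇑π} ∈ S
    obtain ⟨β, ⟨hβS, haβ⟩, -⟩ := hS.1.2 a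
    rw [key β hβS a haβ]
    exact hβS

theorem stmt18 (k d : ℕ) (hk : 1 ≤ k) (hd : 1 ≤ d) (hd2 : d ≤ 2)
    (S : Set (Set (Fin d → Fin (k+1)))) (hS : IsVAS k d S) (hhom : VASHomog k d S) :
    S = Set.range (fun a : Fin d → Fin (k+1) =>
      {a' : Fin d → Fin (k+1) | ∃ π : Equiv.Perm (Fin d), a' = a ∘ ⇑π}) := by
  interval_cases d
  · refine triv_of k 1 S hS (fun α hα a ha π => ?_)
    have h : a ∘ ⇑π = a := by
      funext i; rw [Function.comp_apply, Subsingleton.elim (π i) i]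
    rwa [h]
  · exact triv_of k 2 S hS (keyswap k hk S hS hhom)

end Paper
end
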